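/- The Fischer graph of a non-sofic S-gap shift X_S does not contain an eventually geodesic strictly proximal pair of bi-infinite paths; consequently every non-sofic S-gap shift is topologically direct prime. -/

import Mathlib

namespace Paper

variable {A B C : Type*}

def shiftMap (x : ℤ → A) : ℤ → A := fun i => x (i + 1)

def shiftInvMap (x : ℤ → A) : ℤ → A := fun i => x (i - 1)

/-- A subshift: nonempty, shift-invariant (both directions), and closed
(expressed combinatorially: any configuration all of whose central patterns
are approximated by members is a member). -/
def IsSubshift (X : Set (ℤ → A)) : Prop :=
  X.Nonempty ∧ (∀ x ∈ X, shiftMap x ∈ X) ∧ (∀ x ∈ X, shiftInvMap x ∈ X) ∧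
  ∀ x : ℤ → A, (∀ n : ℕ, ∃ y ∈ X, ∀ i : ℤ, |i| ≤ (n : ℤ) → y i = x i) → x ∈ X

/-- The word `x[i, i+k-1]`. -/
def cfgWord (x : ℤ → A) (i : ℤ) (k : ℕ) : List A :=
  List.ofFn (fun t : Fin k => x (i + ((t : ℕ) : ℤ)))

/-- The language of a set of configurations. -/
def lang (X : Set (ℤ → A)) : Set (List A) := {w | ∃ x ∈ X, ∃ i : ℤ, cfgWord x i w.length = w}

def TransitiveShift (X : Set (ℤ → A)) : Prop :=
  ∀ u ∈ lang X, ∀ v ∈ lang X, ∃ w : List A, u ++ w ++ v ∈ lang X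

/-- Left ray of a configuration: `leftRay x n = x (-1-n)`. -/
def leftRay (x : ℤ → A) : ℕ → A := fun n => x (-1 - (n : ℤ))

def rightRay (x : ℤ → A) : ℕ → A := fun n => x (n : ℤ)

def LeftRays (X : Set (ℤ → A)) : Set (ℕ → A) := leftRay '' X

def RightRays (X : Set (ℤ → A)) : Set (ℕ → A) := rightRay '' X

/-- Glue a left ray and a right ray into a configuration. -/
def glue (l r : ℕ → A) : ℤ → A := fun i => if 0 ≤ i then r i.toNat else l (-1 - i).toNat

/-- Follower set of a left-infinite sequence. -/
def foll (X : Set (ℤ → A)) (l : ℕ → A) : Set (ℕ → A) := {r | glue l r ∈ X}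

def wordThen (w : List A) (r : ℕ → A) : ℕ → A :=
  fun n => if h : n < w.length then w.get ⟨n, h⟩ else r (n - w.length)

/-- Follower set of a word. -/
def follW (X : Set (ℤ → A)) (w : List A) : Set (ℕ → A) := {r | wordThen w r ∈ RightRays X}

def occursInLeft (l : ℕ → A) (w : List A) : Prop :=
  ∃ j : ℕ, ∀ k : Fin w.length, l (j + (w.length - 1 - (k : ℕ))) = w.get k

/-- The language of a left-infinite sequence. -/
def langL (l : ℕ → A) : Set (List A) := {w | occursInLeft l w}

/-- The left ray `l` ends with the word `w`. -/
def raySuffix (l : ℕ → A) (w : List A) : Prop :=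
  ∀ k : Fin w.length, l (w.length - 1 - (k : ℕ)) = w.get k

def HalfSyncWord (X : Set (ℤ → A)) (w : List A) : Prop :=
  w ∈ lang X ∧ ∃ l ∈ LeftRays X, raySuffix l w ∧ langL l = lang X ∧ foll X l = follW X w

def HalfSynchronized (X : Set (ℤ → A)) : Prop := TransitiveShift X ∧ ∃ w, HalfSyncWord X w

def SyncWord (X : Set (ℤ → A)) (w : List A) : Prop :=
  w ∈ lang X ∧ ∀ l ∈ LeftRays X, raySuffix l w → foll X l = follW X w

def Synchronized (X : Set (ℤ → A)) : Prop := TransitiveShift X ∧ ∃ w, SyncWord X w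

/-- Product of two subshifts, over the product alphabet. -/
def prodShift (Y : Set (ℤ → B)) (Z : Set (ℤ → C)) : Set (ℤ → B × C) :=
  {x | (fun i => (x i).1) ∈ Y ∧ (fun i => (x i).2) ∈ Z}

/-- Identification of a pair of sets of right rays with a set of right rays
over the product alphabet. -/
def prodRaySet (S : Set (ℕ → B)) (T : Set (ℕ → C)) : Set (ℕ → B × C) :=
  {r | (fun n => (r n).1) ∈ S ∧ (fun n => (r n).2) ∈ T}

/-- Extend a left ray by one more symbol on the right. -/
def extendRay (l : ℕ → A) (a : A) : ℕ → A := fun n => if n = 0 then a else l (n - 1)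

/-- Edge of the Krieger graph from `u` to `v` labeled `a`. -/
def KEdge (X : Set (ℤ → A)) (u : Set (ℕ → A)) (a : A) (v : Set (ℕ → A)) : Prop :=
  ∃ l ∈ LeftRays X, extendRay l a ∈ LeftRays X ∧ u = foll X l ∧ v = foll X (extendRay l a)

def KStep (X : Set (ℤ → A)) (u v : Set (ℕ → A)) : Prop := ∃ a, KEdge X u a v

/-- Existence of a finite path in the Krieger graph. -/
def KReach (X : Set (ℤ → A)) : Set (ℕ → A) → Set (ℕ → A) → Prop :=
  Relation.ReflTransGen (KStep X)

def KVertex (X : Set (ℤ → A)) (v : Set (ℕ → A)) : Prop := ∃ l ∈ LeftRays X, v = foll X l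

/-- A subshift is sofic iff it has finitely many follower sets. -/
def Sofic (X : Set (ℤ → A)) : Prop := {v : Set (ℕ → A) | KVertex X v}.Finite

/-- Vertex of the Fischer graph (w.r.t. half-synchronizing word `w`): a vertex of the
Krieger graph in the maximal strongly connected subgraph containing `foll w`. -/
def FVertex (X : Set (ℤ → A)) (w : List A) (v : Set (ℕ → A)) : Prop :=
  KVertex X v ∧ KReach X (follW X w) v ∧ KReach X v (follW X w)

/-- Directed (multi)graph with vertex type `V` and edge type `E`. -/
structure DiGraph (V : Type*) (E : Type*) where
  ini : E → V
  ter : E → V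

variable {V E V' E' : Type*}

/-- Bi-infinite path on a graph. -/
def BiPath (G : DiGraph V E) (x : ℤ → E) : Prop := ∀ i : ℤ, G.ter (x i) = G.ini (x (i + 1))

/-- `p` is a finite path of `m+1` edges. -/
def FinPath (G : DiGraph V E) (m : ℕ) (p : Fin (m + 1) → E) : Prop :=
  ∀ k : Fin m, G.ter (p k.castSucc) = G.ini (p k.succ)

/-- The subpath `x[i, i+n]` of a bi-infinite path is a shortest path between its endpoints. -/
def GeodesicSeg (G : DiGraph V E) (x : ℤ → E) (i : ℤ) (n : ℕ) : Prop :=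
  ∀ (m : ℕ) (p : Fin (m + 1) → E), FinPath G m p →
    G.ini (p 0) = G.ini (x i) → G.ter (p (Fin.last m)) = G.ter (x (i + (n : ℤ))) → n ≤ m

def EvGeodesic (G : DiGraph V E) (x : ℤ → E) : Prop :=
  ∃ i₀ : ℤ, ∀ i : ℤ, i₀ ≤ i → ∀ n : ℕ, GeodesicSeg G x i n

/-- Strictly proximal pair of bi-infinite paths. -/
def StrictProxPair (x y : ℤ → E) : Prop :=
  (∀ n : ℕ, ∃ i : ℕ, ∀ k : ℕ, k ≤ n → x ((i : ℤ) + (k : ℤ)) = y ((i : ℤ) + (k : ℤ))) ∧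
  ∀ N : ℕ, ∃ i : ℕ, N ≤ i ∧ x ((i : ℕ) : ℤ) ≠ y ((i : ℕ) : ℤ)

def HasEvGeoProxPair (G : DiGraph V E) : Prop :=
  ∃ x y : ℤ → E, BiPath G x ∧ BiPath G y ∧ EvGeodesic G x ∧ EvGeodesic G y ∧ StrictProxPair x y

/-- Edges of the Fischer graph: Krieger edges between Fischer vertices. -/
def FischerE (X : Set (ℤ → A)) (w : List A) : Type _ :=
  {t : Set (ℕ → A) × A × Set (ℕ → A) //
    FVertex X w t.1 ∧ FVertex X w t.2.2 ∧ KEdge X t.1 t.2.1 t.2.2}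

def FischerGraph (X : Set (ℤ → A)) (w : List A) : DiGraph (Set (ℕ → A)) (FischerE X w) :=
  ⟨fun e => e.1.1, fun e => e.1.2.2⟩

def SlidingBlockCode (X : Set (ℤ → A)) (F : (ℤ → A) → (ℤ → B)) : Prop :=
  ∃ (r : ℕ) (f : (Fin (2 * r + 1) → A) → B),
    ∀ x ∈ X, ∀ i : ℤ, F x i = f (fun k => x (i + ((k : ℕ) : ℤ) - (r : ℤ)))

def ShiftConjugate (X : Set (ℤ → A)) (Y : Set (ℤ → B)) : Prop :=
  ∃ F : (ℤ → A) → (ℤ → B), SlidingBlockCode X F ∧ Set.InjOn F X ∧ F '' X = Y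

def DirectPrime (X : Set (ℤ → A)) : Prop :=
  ∀ (B C : Type) (_ : Finite B) (_ : Finite C) (Y : Set (ℤ → B)) (Z : Set (ℤ → C)),
    IsSubshift Y → IsSubshift Z → ShiftConjugate X (prodShift Y Z) →
    (∃ y, Y = {y}) ∨ (∃ z, Z = {z})

def SgapBlocks (S : Set ℕ) : Set (List Bool) :=
  {w | ∃ s ∈ S, w = false :: List.replicate s true}

def SgapCats (S : Set ℕ) : Set (List Bool) :=
  {w | ∃ l : List (List Bool), (∀ b ∈ l, b ∈ SgapBlocks S) ∧ w = l.flatten}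

def SgapLang (S : Set ℕ) : Set (List Bool) :=
  {w | ∃ u v c, c ∈ SgapCats S ∧ c = u ++ w ++ v}

/-- The `S`-gap shift (`0` is `false`, `1` is `true`). -/
def Sgap (S : Set ℕ) : Set (ℤ → Bool) :=
  {x | ∀ (i : ℤ) (k : ℕ), cfgWord x i k ∈ SgapLang S}

def Block (s : ℕ) : List Bool := false :: List.replicate s true

def cD (c : List Bool) (p : ℕ) : Bool := c.getD p true

lemma length_block (s : ℕ) : (Block s).length = s + 1 := by
  simp [Block]

lemma cD_block_zero (s : ℕ) : cD (Block s) 0 = false := rfl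

lemma cD_block_pos {s p : ℕ} (h1 : 0 < p) (h2 : p ≤ s) : cD (Block s) p = true := by
  rcases Nat.exists_eq_add_of_lt h1 with ⟨t, rfl⟩
  simp only [cD, Block]
  rw [List.getD_cons_succ]
  rw [List.getD_eq_getElem _ _ (by simpa using by omega)]
  simp

lemma cD_append_left {u w : List Bool} {p : ℕ} (h : p < u.length) :
    cD (u ++ w) p = cD u p := by
  simp only [cD]
  rw [List.getD_eq_getElem _ _ (by simp; omega), List.getD_eq_getElem _ _ h,
    List.getElem_append_left h]

lemma cD_append_right {u w : List Bool} (t : ℕ) :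
    cD (u ++ w) (u.length + t) = cD w t := by
  simp only [cD]
  by_cases h : t < w.length
  · rw [List.getD_eq_getElem _ _ (by simp; omega), List.getD_eq_getElem _ _ h]
    rw [List.getElem_append_right (by omega)]
    congr 1
    omega
  · rw [List.getD_eq_default _ _ (by simp; omega), List.getD_eq_default _ _ (by omega)]

lemma cD_join_zero {S : Set ℕ} : ∀ (l : List (List Bool)), (∀ b ∈ l, b ∈ SgapBlocks S) →
    0 < l.flatten.length → cD l.flatten 0 = false := by
  intro l
  induction l with
  | nil => intro _ h; simp at h
  | cons b bs ih =>
    intro hb _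
    rcases hb b (by simp) with ⟨s, _, rfl⟩
    simp [cD, List.flatten]

lemma K1 {S : Set ℕ} : ∀ (l : List (List Bool)), (∀ b ∈ l, b ∈ SgapBlocks S) →
    ∀ p q : ℕ, p < q → q < l.flatten.length → cD l.flatten p = false → cD l.flatten q = false →
    (∀ m, p < m → m < q → cD l.flatten m = true) → q - p - 1 ∈ S := by
  intro l
  induction l with
  | nil => intro _ p q _ h; simp at h
  | cons b bs ih =>
    intro hb p q hpq hq hp0 hq0 hbet
    rcases hb b (by simp) with ⟨s, hsS, hbeq⟩
    have hlen : b.length = s + 1 := by rw [hbeq]; simp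
    have hjoin : (b :: bs).flatten = b ++ bs.flatten := by simp
    rw [hjoin] at hq hp0 hq0 hbet
    by_cases hps : s + 1 ≤ p
    · -- recurse
      have hq' : s + 1 ≤ q := by omega
      obtain ⟨p', rfl⟩ : ∃ p', p = b.length + p' := ⟨p - (s+1), by omega⟩
      obtain ⟨q', hq'eq⟩ : ∃ q', q = b.length + q' := ⟨q - (s+1), by omega⟩
      subst hq'eq
      rw [cD_append_right] at hp0
      rw [cD_append_right] at hq0
      have := ih (fun b hb' => hb b (by simp [hb'])) p' q' (by omega)
        (by rw [List.length_append] at hq; omega) hp0 hq0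
        (fun m hm1 hm2 => by
          have := hbet (b.length + m) (by omega) (by omega)
          rwa [cD_append_right] at this)
      have : q' - p' - 1 ∈ S := this
      convert this using 1
      omega
    · -- p inside first block
      push_neg at hps
      have hp' : p = 0 := by
        rcases Nat.eq_zero_or_pos p with h | h
        · exact h
        · exfalso
          have hcd : cD (b ++ bs.flatten) p = true := by
            rw [cD_append_left (by omega), hbeq]
            exact cD_block_pos h (by omega)
          rw [hcd] at hp0; exact absurd hp0 (by simp)
      subst hp'
      have hqs : ¬ q ≤ s := by
        intro hqs
        have : cD (b ++ bs.flatten) q = true := by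
          rw [cD_append_left (by omega), hbeq]
          exact cD_block_pos (by omega) hqs
        rw [this] at hq0; exact absurd hq0 (by simp)
      push_neg at hqs
      rcases Nat.lt_or_ge (s+1) q with hq2 | hq2
      · -- there is a false at s+1 strictly between: contradiction
        exfalso
        have h1 : cD (b ++ bs.flatten) (s+1) = false := by
          have : s + 1 = b.length + 0 := by omega
          rw [this, cD_append_right]
          apply cD_join_zero bs (fun b hb' => hb b (by simp [hb']))
          rw [List.length_append] at hq
          omega
        have := hbet (s+1) (by omega) hq2
        rw [this] at h1; exact absurd h1 (by simp)
      · have : q = s + 1 := by omega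
        subst this
        simpa using hsS

lemma K2 {S : Set ℕ} : ∀ (l : List (List Bool)), (∀ b ∈ l, b ∈ SgapBlocks S) →
    ∀ p L : ℕ, p + L ≤ l.flatten.length → (∀ m, p ≤ m → m < p + L → cD l.flatten m = true) →
    L = 0 ∨ ∃ s ∈ S, L ≤ s := by
  intro l
  induction l with
  | nil => intro _ p L h _; left; simp at h; omega
  | cons b bs ih =>
    intro hb p L hlen hrun
    rcases Nat.eq_zero_or_pos L with h0 | hL
    · left; exact h0
    rcases hb b (by simp) with ⟨s, hsS, hbeq⟩
    have hblen : b.length = s + 1 := by rw [hbeq]; simp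
    have hjoin : (b :: bs).flatten = b ++ bs.flatten := by simp
    rw [hjoin] at hlen hrun
    by_cases hin : p + L ≤ s + 1
    · -- inside first block
      have hp1 : 0 < p := by
        by_contra h
        have := hrun 0 (by omega) (by omega)
        rw [cD_append_left (by omega), hbeq] at this
        simp [cD] at this
      right; exact ⟨s, hsS, by omega⟩
    · push_neg at hin
      by_cases hps : p ≤ s
      · -- run would cover position s+1 which is false
        exfalso
        have hne : 0 < bs.flatten.length := by
          rw [List.length_append] at hlen; omega
        have h1 : cD (b ++ bs.flatten) (s+1) = false := by
          have : s + 1 = b.length + 0 := by omega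
          rw [this, cD_append_right]
          exact cD_join_zero bs (fun b hb' => hb b (by simp [hb'])) hne
        have := hrun (s+1) (by omega) (by omega)
        rw [this] at h1; exact absurd h1 (by simp)
      · push_neg at hps
        obtain ⟨p', rfl⟩ : ∃ p', p = b.length + p' := ⟨p - (s+1), by omega⟩
        exact ih (fun b hb' => hb b (by simp [hb'])) p' L
          (by rw [List.length_append] at hlen; omega)
          (fun m hm1 hm2 => by
            have := hrun (b.length + m) (by omega) (by omega)
            rwa [cD_append_right] at this)

lemma length_cfgWord (x : ℤ → Bool) (i : ℤ) (k : ℕ) : (cfgWord x i k).length = k := by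
  simp [cfgWord]

lemma cfgWord_getElem (x : ℤ → Bool) (i : ℤ) (k n : ℕ) (h : n < (cfgWord x i k).length) :
    (cfgWord x i k)[n] = x (i + (n : ℤ)) := by
  simp [cfgWord]

lemma cD_cfgWord (x : ℤ → Bool) (i : ℤ) {k t : ℕ} (ht : t < k) :
    cD (cfgWord x i k) t = x (i + (t : ℤ)) := by
  rw [cD, List.getD_eq_getElem _ _ (by simp [length_cfgWord]; omega)]
  exact cfgWord_getElem x i k t _

lemma cD_mid {u w v : List Bool} {t : ℕ} (ht : t < w.length) :
    cD (u ++ w ++ v) (u.length + t) = cD w t := by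
  rw [cD_append_left (by simp; omega)]
  exact cD_append_right t

def Gaps (S : Set ℕ) (x : ℤ → Bool) : Prop :=
  ∀ i j : ℤ, i < j → x i = false → x j = false →
    (∀ m : ℤ, i < m → m < j → x m = true) → (j - i - 1).toNat ∈ S

def Runs (S : Set ℕ) (x : ℤ → Bool) : Prop :=
  ∀ (i : ℤ) (L : ℕ), (∀ t : ℕ, t < L → x (i + (t : ℤ)) = true) → ∃ s ∈ S, L ≤ s

lemma lang_elim {S : Set ℕ} {w : List Bool} (h : w ∈ SgapLang S) :
    ∃ (l : List (List Bool)) (u v : List Bool),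
      (∀ b ∈ l, b ∈ SgapBlocks S) ∧ l.flatten = u ++ w ++ v := by
  obtain ⟨u, v, c, ⟨l, hl, rfl⟩, hc⟩ := h
  exact ⟨l, u, v, hl, hc⟩

lemma gaps_of_mem {S : Set ℕ} {x : ℤ → Bool} (hx : x ∈ Sgap S) : Gaps S x := by
  intro i j hij h0 h1 hbet
  set k := (j - i).toNat + 1 with hk
  obtain ⟨l, u, v, hl, hjoin⟩ := lang_elim (hx i k)
  have hlenj : l.flatten.length = u.length + k + v.length := by
    rw [hjoin]; simp [length_cfgWord]; omega
  have hwlen : (cfgWord x i k).length = k := length_cfgWord x i k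
  have key := K1 l hl u.length (u.length + (j - i).toNat) (by omega) (by omega)
    (by rw [show u.length = u.length + 0 by omega, hjoin, cD_mid (by omega),
          cD_cfgWord x i (by omega)]
        simpa using h0)
    (by rw [hjoin, cD_mid (by omega), cD_cfgWord x i (by omega)]
        have : i + ((j - i).toNat : ℤ) = j := by omega
        rw [this]; exact h1)
    (by intro m hm1 hm2
        obtain ⟨t, rfl⟩ : ∃ t, m = u.length + t := ⟨m - u.length, by omega⟩
        rw [hjoin, cD_mid (by omega), cD_cfgWord x i (by omega)]
        exact hbet _ (by omega) (by omega))
  have heq : (j - i - 1).toNat = u.length + (j - i).toNat - u.length - 1 := by omega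
  rw [heq]; exact key

lemma runs_of_mem {S : Set ℕ} (hS : S.Nonempty) {x : ℤ → Bool} (hx : x ∈ Sgap S) :
    Runs S x := by
  intro i L hrun
  obtain ⟨l, u, v, hl, hjoin⟩ := lang_elim (hx i L)
  have hlenj : l.flatten.length = u.length + L + v.length := by
    rw [hjoin]; simp [length_cfgWord]; omega
  have key := K2 l hl u.length L (by omega) (by
    intro m hm1 hm2
    obtain ⟨t, rfl⟩ : ∃ t, m = u.length + t := ⟨m - u.length, by omega⟩
    rw [hjoin, cD_mid (by rw [length_cfgWord]; omega), cD_cfgWord x i (by omega)]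
    exact hrun _ (by omega))
  rcases key with h0 | h
  · obtain ⟨s, hs⟩ := hS
    exact ⟨s, hs, by omega⟩
  · exact h

lemma cfgWord_eq_append (x : ℤ → Bool) (i : ℤ) (a k : ℕ) (ha : a ≤ k) :
    cfgWord x i k = cfgWord x i a ++ cfgWord x (i + (a : ℤ)) (k - a) := by
  apply List.ext_getElem (by simp [length_cfgWord]; omega)
  intro n h1 h2
  by_cases hn : n < a
  · rw [List.getElem_append_left (by rw [length_cfgWord]; omega)]
    rw [cfgWord_getElem, cfgWord_getElem]
  · rw [List.getElem_append_right (by rw [length_cfgWord]; omega)]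
    rw [cfgWord_getElem, cfgWord_getElem]
    congr 1
    rw [length_cfgWord]
    omega

lemma cfgWord_all_true (x : ℤ → Bool) (i : ℤ) (k : ℕ)
    (h : ∀ t : ℕ, t < k → x (i + (t : ℤ)) = true) :
    cfgWord x i k = List.replicate k true := by
  apply List.ext_getElem (by simp [length_cfgWord])
  intro n h1 h2
  rw [cfgWord_getElem, List.getElem_replicate]
  exact h n (by rw [length_cfgWord] at h1; omega)

lemma cfgWord_cons (x : ℤ → Bool) (i : ℤ) (k : ℕ) :
    cfgWord x i (k + 1) = x i :: cfgWord x (i + 1) k := by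
  apply List.ext_getElem (by simp [length_cfgWord])
  intro n h1 h2
  rcases n with _ | n
  · simp [cfgWord_getElem]
  · rw [cfgWord_getElem, List.getElem_cons_succ, cfgWord_getElem]
    congr 1
    push_cast
    ring


lemma bne_false {b : Bool} (h : ¬ b = false) : b = true := by
  cases b <;> simp_all

lemma W0 {S : Set ℕ} {x : ℤ → Bool} (hg : Gaps S x) (hr : Runs S x) :
    ∀ (k : ℕ) (i : ℤ), x i = false →
    ∃ (l : List (List Bool)) (v : List Bool),
      (∀ b ∈ l, b ∈ SgapBlocks S) ∧ l.flatten = cfgWord x i k ++ v := by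
  intro k
  induction k using Nat.strong_induction_on with
  | _ k ih =>
    intro i h0
    rcases Nat.eq_zero_or_pos k with rfl | hk
    · exact ⟨[], [], by simp, by simp [cfgWord]⟩
    by_cases hz : ∃ t : ℕ, 0 < t ∧ t < k ∧ x (i + (t : ℤ)) = false
    · set t₀ := Nat.find hz with ht₀def
      have ht₀ := Nat.find_spec hz
      have hmin : ∀ t : ℕ, 0 < t → t < t₀ → x (i + (t : ℤ)) = true := by
        intro t h1 h2
        have hnm := Nat.find_min hz h2
        apply bne_false
        intro hc
        exact hnm ⟨h1, by omega, hc⟩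
      have hgap : (t₀ - 1 : ℕ) ∈ S := by
        have := hg i (i + (t₀ : ℤ)) (by omega) h0 ht₀.2.2 (by
          intro m hm1 hm2
          obtain ⟨t, ht, rfl⟩ : ∃ t : ℕ, 0 < t ∧ m = i + (t : ℤ) :=
            ⟨(m - i).toNat, by omega, by omega⟩
          exact hmin t ht (by omega))
        have heq : (i + (t₀ : ℤ) - i - 1).toNat = t₀ - 1 := by omega
        rwa [heq] at this
      obtain ⟨l', v', hl', hj'⟩ := ih (k - t₀) (by omega) (i + (t₀ : ℤ)) ht₀.2.2
      refine ⟨Block (t₀ - 1) :: l', v', ?_, ?_⟩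
      · intro b hb
        rcases List.mem_cons.1 hb with rfl | hb'
        · exact ⟨t₀ - 1, hgap, rfl⟩
        · exact hl' b hb'
      · have hsplit : cfgWord x i k = Block (t₀ - 1) ++ cfgWord x (i + (t₀ : ℤ)) (k - t₀) := by
          obtain ⟨k', rfl⟩ : ∃ k', k = k' + 1 := ⟨k - 1, by omega⟩
          have e1 : (i + 1) + ((t₀ - 1 : ℕ) : ℤ) = i + (t₀ : ℤ) := by omega
          have e2 : k' - (t₀ - 1) = k' + 1 - t₀ := by omega
          rw [cfgWord_cons, cfgWord_eq_append x (i+1) (t₀ - 1) k' (by omega),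
            cfgWord_all_true x (i+1) (t₀ - 1) (by
              intro t ht
              have e3 : (i + 1 + (t : ℤ)) = i + ((t + 1 : ℕ) : ℤ) := by push_cast; ring
              rw [e3]
              exact hmin (t + 1) (by omega) (by omega)),
            e1, e2, Block, h0, List.cons_append]
        show (Block (t₀ - 1)).append l'.flatten = cfgWord x i k ++ v'
        rw [List.append_eq, hj', hsplit, List.append_assoc]
    · push_neg at hz
      have hall : ∀ t : ℕ, t < k - 1 → x (i + 1 + (t : ℤ)) = true := by
        intro t ht
        have : (i + 1 + (t : ℤ)) = i + ((t + 1 : ℕ) : ℤ) := by push_cast; ring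
        rw [this]
        exact bne_false (hz (t+1) (by omega) (by omega))
      obtain ⟨s, hsS, hs⟩ := hr (i + 1) (k - 1) hall
      refine ⟨[Block s], List.replicate (s - (k - 1)) true, ?_, ?_⟩
      · intro b hb
        rcases List.mem_singleton.1 hb with rfl
        exact ⟨s, hsS, rfl⟩
      · show (Block s).append [] = cfgWord x i k ++ List.replicate (s - (k-1)) true
        rw [List.append_eq, List.append_nil]
        obtain ⟨k', rfl⟩ : ∃ k', k = k' + 1 := ⟨k - 1, by omega⟩
        rw [cfgWord_cons, cfgWord_all_true x (i+1) k' (by simpa using hall), Block, h0]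
        have : s = k' + (s - k') := by omega
        rw [this, List.replicate_add]
        simp

theorem mem_of_good {S : Set ℕ} {x : ℤ → Bool} (hg : Gaps S x) (hr : Runs S x) :
    x ∈ Sgap S := by
  intro i k
  by_cases hz : ∃ t : ℕ, t < k ∧ x (i + (t : ℤ)) = false
  · set t₀ := Nat.find hz with ht₀def
    have ht₀ := Nat.find_spec hz
    have hmin : ∀ t : ℕ, t < t₀ → x (i + (t : ℤ)) = true := by
      intro t h2
      have h3 := Nat.find_min hz h2
      apply bne_false
      intro hc
      exact h3 ⟨by omega, hc⟩
    obtain ⟨l', v', hl', hj'⟩ := W0 hg hr (k - t₀) (i + (t₀ : ℤ)) ht₀.2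
    obtain ⟨s₀, hs₀S, hs₀⟩ := hr i t₀ hmin
    refine ⟨false :: List.replicate (s₀ - t₀) true, v', (Block s₀ :: l').flatten, ⟨_, ?_, rfl⟩, ?_⟩
    · intro b hb
      rcases List.mem_cons.1 hb with rfl | hb'
      · exact ⟨s₀, hs₀S, rfl⟩
      · exact hl' b hb'
    · show (Block s₀).append l'.flatten = _
      rw [List.append_eq, hj']
      have hsplit : cfgWord x i k =
          List.replicate t₀ true ++ cfgWord x (i + (t₀ : ℤ)) (k - t₀) := by
        rw [cfgWord_eq_append x i t₀ k (by omega), cfgWord_all_true x i t₀ hmin]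
      rw [hsplit, Block]
      have : s₀ = (s₀ - t₀) + t₀ := by omega
      rw [this, List.replicate_add]
      simp only [List.cons_append, List.append_assoc, Nat.add_sub_cancel]
  · push_neg at hz
    have hall : ∀ t : ℕ, t < k → x (i + (t : ℤ)) = true := by
      intro t ht
      exact bne_false (hz t ht)
    obtain ⟨s, hsS, hs⟩ := hr i k hall
    refine ⟨false :: List.replicate (s - k) true, [], Block s, ⟨[Block s], ?_, by simp⟩, ?_⟩
    · intro b hb
      rcases List.mem_singleton.1 hb with rfl
      exact ⟨s, hsS, rfl⟩
    · rw [cfgWord_all_true x i k hall, Block]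
      have : s = (s - k) + k := by omega
      rw [this, List.replicate_add]
      simp

theorem sgap_char {S : Set ℕ} (hS : S.Nonempty) (x : ℤ → Bool) :
    x ∈ Sgap S ↔ Gaps S x ∧ Runs S x :=
  ⟨fun h => ⟨gaps_of_mem h, runs_of_mem hS h⟩, fun h => mem_of_good h.1 h.2⟩


/-- `S` is unbounded. -/
def Unb (S : Set ℕ) : Prop := ∀ L : ℕ, ∃ s ∈ S, L ≤ s

lemma runs_of_unb {S : Set ℕ} (h : Unb S) (x : ℤ → Bool) : Runs S x :=
  fun _ L _ => h L

lemma glue_nat (l r : ℕ → Bool) {i : ℤ} (hi : 0 ≤ i) : glue l r i = r i.toNat := by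
  simp [glue, hi]

lemma glue_neg (l r : ℕ → Bool) {i : ℤ} (hi : i < 0) : glue l r i = l (-1 - i).toNat := by
  simp [glue]
  omega

lemma glue_natc (l r : ℕ → Bool) (n : ℕ) : glue l r (n : ℤ) = r n := by
  rw [glue_nat l r (by omega)]
  simp

lemma glue_negc (l r : ℕ → Bool) (n : ℕ) : glue l r (-1 - (n : ℤ)) = l n := by
  rw [glue_neg l r (by omega)]
  congr 1
  omega

lemma glue_leftRay_neg (x' : ℤ → Bool) (r : ℕ → Bool) {m : ℤ} (hm : m < 0) :
    glue (leftRay x') r m = x' m := by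
  rw [glue_neg _ _ hm, leftRay]
  congr 1
  omega

lemma glue_transfer {S : Set ℕ} (hS : S.Nonempty) {l : ℕ → Bool} {x' : ℤ → Bool}
    {k k' : ℕ} {r : ℕ → Bool}
    (hx' : x' ∈ Sgap S)
    (hk : l k = false) (hk1 : ∀ n, n < k → l n = true)
    (hk' : leftRay x' k' = false) (hk1' : ∀ n, n < k' → leftRay x' n = true)
    (hSk : ∀ m : ℕ, (k + m) ∈ S → (k' + m) ∈ S)
    (hside : k' ≤ k ∨ Unb S)
    (h : glue l r ∈ Sgap S) : glue (leftRay x') r ∈ Sgap S := by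
  have hgap := gaps_of_mem h
  have hrunS := runs_of_mem hS h
  have hgap' := gaps_of_mem hx'
  have hrun' := runs_of_mem hS hx'
  refine mem_of_good ?_ ?_
  · -- Gaps
    intro i j hij hi hj hbet
    by_cases hj0 : j < 0
    · -- both negative: use x'
      have e1 : x' i = false := by rwa [← glue_leftRay_neg x' r (by omega)]
      have e2 : x' j = false := by rwa [← glue_leftRay_neg x' r hj0]
      exact hgap' i j hij e1 e2 (fun m hm1 hm2 => by
        rw [← glue_leftRay_neg x' r (by omega)]
        exact hbet m hm1 hm2)
    push_neg at hj0
    by_cases hi0 : 0 ≤ i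
    · -- both nonnegative: transfer to source
      have e1 : glue l r i = false := by
        rw [glue_nat _ _ hi0]; rw [glue_nat _ _ hi0] at hi; exact hi
      have e2 : glue l r j = false := by
        rw [glue_nat _ _ hj0]; rw [glue_nat _ _ hj0] at hj; exact hj
      exact hgap i j hij e1 e2 (fun m hm1 hm2 => by
        rw [glue_nat _ _ (by omega)]
        rw [← glue_nat (leftRay x') r (by omega)]
        exact hbet m hm1 hm2)
    push_neg at hi0
    -- mixed: i < 0 ≤ j
    have hie : i = -1 - (k' : ℤ) := by
      have h1 : leftRay x' (-1 - i).toNat = false := by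
        rwa [glue_neg _ _ hi0] at hi
      by_cases hc : (-1 - i).toNat < k'
      · exact absurd h1 (by rw [hk1' _ hc]; simp)
      · by_cases hc2 : k' < (-1 - i).toNat
        · exfalso
          have := hbet (-1 - (k' : ℤ)) (by omega) (by omega)
          rw [glue_neg _ _ (by omega)] at this
          have e : (-1 - (-1 - (k' : ℤ))).toNat = k' := by omega
          rw [e, hk'] at this
          simp at this
        · omega
    -- source pair (-1-k, j)
    have key := hgap (-1 - (k : ℤ)) j (by omega)
      (by rw [glue_neg _ _ (by omega)]
          have e : (-1 - (-1 - (k : ℤ))).toNat = k := by omega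
          rw [e]; exact hk)
      (by rw [glue_nat _ _ hj0]
          rw [glue_nat _ _ hj0] at hj; exact hj)
      (by intro m hm1 hm2
          by_cases hm0 : m < 0
          · rw [glue_neg _ _ hm0]
            exact hk1 _ (by omega)
          · push_neg at hm0
            rw [glue_nat _ _ hm0]
            rw [← glue_nat (leftRay x') r hm0]
            exact hbet m (by omega) hm2)
    have e3 : (j - (-1 - (k : ℤ)) - 1).toNat = k + j.toNat := by omega
    rw [e3] at key
    have key2 := hSk j.toNat key
    have e4 : (j - i - 1).toNat = k' + j.toNat := by omega
    rw [e4]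
    exact key2
  · -- Runs
    intro i L hrun
    by_cases hi0 : 0 ≤ i
    · exact hrunS i L (fun t ht => by
        rw [glue_nat _ _ (by omega)]
        rw [← glue_nat (leftRay x') r (by omega)]
        exact hrun t ht)
    push_neg at hi0
    by_cases hiL : i + (L : ℤ) ≤ 0
    · exact hrun' i L (fun t ht => by
        rw [← glue_leftRay_neg x' r (by omega)]
        exact hrun t ht)
    push_neg at hiL
    rcases hside with hkk | hub
    · -- crossing run, k' ≤ k
      have he : -i ≤ (k' : ℤ) := by
        by_contra hc
        push_neg at hc
        have := hrun (-1 - (k' : ℤ) - i).toNat (by omega)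
        have e : i + ((-1 - (k' : ℤ) - i).toNat : ℤ) = -1 - (k' : ℤ) := by omega
        rw [e, glue_neg _ _ (by omega)] at this
        have e2 : (-1 - (-1 - (k' : ℤ))).toNat = k' := by omega
        rw [e2, hk'] at this
        simp at this
      exact hrunS i L (fun t ht => by
        by_cases hm : i + (t : ℤ) < 0
        · rw [glue_neg _ _ hm]
          exact hk1 _ (by omega)
        · push_neg at hm
          rw [glue_nat _ _ hm]
          rw [← glue_nat (leftRay x') r hm]
          exact hrun t ht)
    · exact hub L

lemma foll_eq_of_transfer {S : Set ℕ} (hS : S.Nonempty) {x x' : ℤ → Bool} {k k' : ℕ}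
    (hx : x ∈ Sgap S) (hx' : x' ∈ Sgap S)
    (hk : leftRay x k = false) (hk1 : ∀ n, n < k → leftRay x n = true)
    (hk' : leftRay x' k' = false) (hk1' : ∀ n, n < k' → leftRay x' n = true)
    (hSk : ∀ m : ℕ, (k + m) ∈ S ↔ (k' + m) ∈ S)
    (hside : (k = k') ∨ Unb S) :
    foll (Sgap S) (leftRay x) = foll (Sgap S) (leftRay x') := by
  ext r
  constructor
  · intro h
    exact glue_transfer hS hx' hk hk1 hk' hk1' (fun m hm => (hSk m).1 hm)
      (by rcases hside with rfl | hub
          · exact Or.inl le_rfl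
          · exact Or.inr hub) h
  · intro h
    exact glue_transfer hS hx hk' hk1' hk hk1 (fun m hm => (hSk m).2 hm)
      (by rcases hside with rfl | hub
          · exact Or.inl le_rfl
          · exact Or.inr hub) h


/-- Canonical configuration with a single `0` at position `-1-k`. -/
def xk (k : ℕ) : ℤ → Bool := fun i => decide (i ≠ -1 - (k : ℤ))

/-- Canonical all-ones configuration. -/
def pt1 : ℤ → Bool := fun _ => true

/-- Test right ray with single `0` at position `m`. -/
def rmr (m : ℕ) : ℕ → Bool := fun n => decide (n ≠ m)

lemma xk_mem {S : Set ℕ} (hUnb : Unb S) (k : ℕ) : xk k ∈ Sgap S := by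
  apply mem_of_good
  · intro i j hij hi hj _
    exfalso
    simp only [xk, decide_eq_false_iff_not, not_not] at hi hj
    omega
  · exact runs_of_unb hUnb _

lemma pt1_mem {S : Set ℕ} (hUnb : Unb S) : pt1 ∈ Sgap S := by
  apply mem_of_good
  · intro i j _ hi _ _
    exact absurd hi (by simp [pt1])
  · exact runs_of_unb hUnb _

lemma leftRay_xk_self (k : ℕ) : leftRay (xk k) k = false := by
  simp [leftRay, xk]

lemma leftRay_xk_ne (k n : ℕ) (h : n ≠ k) : leftRay (xk k) n = true := by
  simp only [leftRay, xk, decide_eq_true_iff]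
  omega

def Vk (S : Set ℕ) (k : ℕ) : Set (ℕ → Bool) := foll (Sgap S) (leftRay (xk k))

def Vinf (S : Set ℕ) : Set (ℕ → Bool) := foll (Sgap S) (leftRay pt1)

lemma vk_test {S : Set ℕ} (hS : S.Nonempty) (hUnb : Unb S) (k m : ℕ) :
    rmr m ∈ Vk S k ↔ (k + m) ∈ S := by
  constructor
  · intro h
    have hgap := gaps_of_mem h
    have key := hgap (-1 - (k : ℤ)) (m : ℤ) (by omega)
      (by rw [glue_leftRay_neg _ _ (by omega)]
          simp [xk])
      (by rw [glue_natc]; simp [rmr])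
      (by intro p hp1 hp2
          by_cases hp0 : p < 0
          · rw [glue_leftRay_neg _ _ hp0]
            simp only [xk, decide_eq_true_iff]
            omega
          · push_neg at hp0
            rw [glue_nat _ _ hp0]
            simp only [rmr, decide_eq_true_iff]
            omega)
    have e : ((m : ℤ) - (-1 - (k : ℤ)) - 1).toNat = k + m := by omega
    rwa [e] at key
  · intro h
    apply mem_of_good
    · intro i j hij hi hj _
      have zi : i = -1 - (k : ℤ) ∨ i = (m : ℤ) := by
        by_cases hi0 : i < 0
        · rw [glue_leftRay_neg _ _ hi0] at hi
          simp only [xk, decide_eq_false_iff_not, not_not] at hi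
          left; exact hi
        · push_neg at hi0
          rw [glue_nat _ _ hi0] at hi
          simp only [rmr, decide_eq_false_iff_not, not_not] at hi
          right; omega
      have zj : j = -1 - (k : ℤ) ∨ j = (m : ℤ) := by
        by_cases hj0 : j < 0
        · rw [glue_leftRay_neg _ _ hj0] at hj
          simp only [xk, decide_eq_false_iff_not, not_not] at hj
          left; exact hj
        · push_neg at hj0
          rw [glue_nat _ _ hj0] at hj
          simp only [rmr, decide_eq_false_iff_not, not_not] at hj
          right; omega
      rcases zi with rfl | rfl <;> rcases zj with h2 | h2 <;> try omega
      · rw [h2]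
        have e : ((m : ℤ) - (-1 - (k : ℤ)) - 1).toNat = k + m := by omega
        rw [e]; exact h
    · exact runs_of_unb hUnb _

lemma vinf_test {S : Set ℕ} (hS : S.Nonempty) (hUnb : Unb S) (m : ℕ) :
    rmr m ∈ Vinf S := by
  apply mem_of_good
  · intro i j hij hi hj _
    have zi : i = (m : ℤ) := by
      by_cases hi0 : i < 0
      · rw [glue_leftRay_neg _ _ hi0] at hi
        simp [pt1] at hi
      · push_neg at hi0
        rw [glue_nat _ _ hi0] at hi
        simp only [rmr, decide_eq_false_iff_not, not_not] at hi
        omega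
    have zj : j = (m : ℤ) := by
      by_cases hj0 : j < 0
      · rw [glue_leftRay_neg _ _ hj0] at hj
        simp [pt1] at hj
      · push_neg at hj0
        rw [glue_nat _ _ hj0] at hj
        simp only [rmr, decide_eq_false_iff_not, not_not] at hj
        omega
    omega
  · exact runs_of_unb hUnb _

lemma foll_eq_vk {S : Set ℕ} (hS : S.Nonempty) (hUnb : Unb S) {x : ℤ → Bool} {k : ℕ}
    (hx : x ∈ Sgap S) (hk : leftRay x k = false) (hk1 : ∀ n, n < k → leftRay x n = true) :
    foll (Sgap S) (leftRay x) = Vk S k :=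
  foll_eq_of_transfer hS hx (xk_mem hUnb k) hk hk1 (leftRay_xk_self k)
    (fun n hn => leftRay_xk_ne k n (by omega)) (fun _ => Iff.rfl) (Or.inl rfl)

lemma vk_congr {S : Set ℕ} (hS : S.Nonempty) (hUnb : Unb S) {k k' : ℕ}
    (hSk : ∀ m : ℕ, (k + m) ∈ S ↔ (k' + m) ∈ S) : Vk S k = Vk S k' :=
  foll_eq_of_transfer hS (xk_mem hUnb k) (xk_mem hUnb k') (leftRay_xk_self k)
    (fun n hn => leftRay_xk_ne k n (by omega)) (leftRay_xk_self k')
    (fun n hn => leftRay_xk_ne k' n (by omega)) hSk (Or.inr hUnb)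

lemma foll_eq_vinf {S : Set ℕ} (hS : S.Nonempty) (hUnb : Unb S) {x : ℤ → Bool}
    (hx : x ∈ Sgap S) (hall : ∀ n, leftRay x n = true) :
    foll (Sgap S) (leftRay x) = Vinf S := by
  have main : ∀ (y : ℤ → Bool), (∀ n, leftRay y n = true) → ∀ r,
      glue (leftRay y) r ∈ Sgap S → ∀ (y' : ℤ → Bool), (∀ n, leftRay y' n = true) →
      glue (leftRay y') r ∈ Sgap S := by
    intro y hy r hyr y' hy'
    have hgap := gaps_of_mem hyr
    apply mem_of_good
    · intro i j hij hi hj hbet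
      have hi0 : 0 ≤ i := by
        by_contra hc
        push_neg at hc
        rw [glue_neg _ _ hc, hy' _] at hi
        simp at hi
      have hj0 : 0 ≤ j := by omega
      refine hgap i j hij ?_ ?_ ?_
      · rw [glue_nat _ _ hi0]; rwa [glue_nat _ _ hi0] at hi
      · rw [glue_nat _ _ hj0]; rwa [glue_nat _ _ hj0] at hj
      · intro p hp1 hp2
        rw [glue_nat _ _ (by omega)]
        rw [← glue_nat (leftRay y') r (by omega)]
        exact hbet p hp1 hp2
    · exact runs_of_unb hUnb _
  ext r
  exact ⟨fun h => main x hall r h pt1 (fun n => rfl),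
    fun h => main pt1 (fun n => rfl) r h x hall⟩

lemma sofic_of_evper {S : Set ℕ} (hS : S.Nonempty) {j d : ℕ} (hd : 0 < d)
    (h : ∀ k, j ≤ k → ((k ∈ S) ↔ (k + d) ∈ S)) : Sofic (Sgap S) := by
  by_cases hub : ∃ s ∈ S, j ≤ s
  · obtain ⟨s₀, hs₀S, hs₀⟩ := hub
    have hstep : ∀ t : ℕ, s₀ + t * d ∈ S := by
      intro t
      induction t with
      | zero => simpa using hs₀S
      | succ t ih =>
        have := (h (s₀ + t * d) (by omega)).1 ih
        have e : s₀ + t * d + d = s₀ + (t + 1) * d := by ring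
        rwa [e] at this
    have hUnb : Unb S := by
      intro L
      refine ⟨s₀ + L * d, hstep L, ?_⟩
      calc L ≤ L * d := Nat.le_mul_of_pos_right L hd
        _ ≤ s₀ + L * d := by omega
    have hvkd : ∀ k, j ≤ k → Vk S (k + d) = Vk S k := by
      intro k hk
      apply vk_congr hS hUnb
      intro m
      constructor
      · intro hm
        exact (h (k + m) (by omega)).2 (by
          rw [show k + m + d = k + d + m by ring]
          exact hm)
      · intro hm
        have := (h (k + m) (by omega)).1 hm
        rwa [show k + m + d = k + d + m by ring] at this
    have hvk_lt : ∀ k, ∃ k' < j + d, Vk S k = Vk S k' := by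
      intro k
      induction k using Nat.strong_induction_on with
      | _ k ih =>
        by_cases hlt : k < j + d
        · exact ⟨k, hlt, rfl⟩
        · obtain ⟨k', hk', he⟩ := ih (k - d) (by omega)
          refine ⟨k', hk', ?_⟩
          have e : k = (k - d) + d := by omega
          rw [e, hvkd (k - d) (by omega), he]
    apply Set.Finite.subset
      (Set.Finite.insert (Vinf S)
        (Set.Finite.image (fun k => Vk S k) (Set.finite_Iio (j + d))))
    intro v hv
    obtain ⟨l, ⟨x, hx, rfl⟩, rfl⟩ := hv
    by_cases hz : ∃ n, leftRay x n = false
    · have hdp : DecidablePred fun n => leftRay x n = false := fun n => instDecidableEqBool _ _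
      set k₀ := Nat.find hz with hk₀
      have hspec := Nat.find_spec hz
      have hmin : ∀ n, n < k₀ → leftRay x n = true := by
        intro n hn
        exact bne_false (Nat.find_min hz hn)
      rw [foll_eq_vk hS hUnb hx hspec hmin]
      obtain ⟨k', hk', he⟩ := hvk_lt k₀
      rw [he]
      exact Set.mem_insert_of_mem _ ⟨k', hk', rfl⟩
    · push_neg at hz
      have hall : ∀ n, leftRay x n = true := fun n => bne_false (hz n)
      rw [foll_eq_vinf hS hUnb hx hall]
      exact Set.mem_insert _ _
  · push_neg at hub
    have hlt : ∀ s ∈ S, s < j := fun s hs => by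
      have := hub s hs; omega
    apply Set.Finite.subset (Set.Finite.biUnion (Set.finite_Iio j)
      (fun k _ => Set.Subsingleton.finite (s := {v : Set (ℕ → Bool) |
        ∃ x ∈ Sgap S, leftRay x k = false ∧ (∀ n, n < k → leftRay x n = true) ∧
          v = foll (Sgap S) (leftRay x)}) (by
        rintro v₁ ⟨x₁, hx₁, hf₁, hm₁, rfl⟩ v₂ ⟨x₂, hx₂, hf₂, hm₂, rfl⟩
        exact foll_eq_of_transfer hS hx₁ hx₂ hf₁ hm₁ hf₂ hm₂ (fun _ => Iff.rfl)
          (Or.inl rfl))))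
    intro v hv
    obtain ⟨l, ⟨x, hx, rfl⟩, rfl⟩ := hv
    have hzex : ∃ n, n < j ∧ leftRay x n = false := by
      by_contra hc
      push_neg at hc
      have hrun := runs_of_mem hS hx (-(j : ℤ)) j (by
        intro t ht
        have e : -(j : ℤ) + (t : ℤ) = -1 - ((j - 1 - t : ℕ) : ℤ) := by omega
        rw [e]
        exact bne_false (hc (j - 1 - t) (by omega)))
      obtain ⟨s, hsS, hjs⟩ := hrun
      exact absurd (hlt s hsS) (by omega)
    have hz : ∃ n, leftRay x n = false := ⟨hzex.choose, hzex.choose_spec.2⟩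
    set k₀ := Nat.find hz with hk₀
    have hspec := Nat.find_spec hz
    have hmin : ∀ n, n < k₀ → leftRay x n = true := fun n hn =>
      bne_false (Nat.find_min hz hn)
    have hk₀j : k₀ < j := by
      have := Nat.find_min' hz hzex.choose_spec.2
      have := hzex.choose_spec.1
      omega
    refine Set.mem_biUnion (show k₀ ∈ Set.Iio j from hk₀j) ?_
    exact ⟨x, hx, hspec, hmin, rfl⟩

lemma unb_of_nsofic {S : Set ℕ} (hS : S.Nonempty) (hns : ¬ Sofic (Sgap S)) : Unb S := by
  by_contra hc
  unfold Unb at hc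
  push_neg at hc
  obtain ⟨L, hL⟩ := hc
  exact hns (sofic_of_evper hS (j := L) (d := 1) (by omega) (by
    intro k hk
    constructor
    · intro hks
      exact absurd (hL k hks) (by omega)
    · intro hks
      exact absurd (hL (k + 1) hks) (by omega)))

lemma vk_inj {S : Set ℕ} (hS : S.Nonempty) (hns : ¬ Sofic (Sgap S)) {a b : ℕ}
    (hab : Vk S a = Vk S b) : a = b := by
  have hUnb := unb_of_nsofic hS hns
  by_contra hne
  wlog hlt : a < b generalizing a b
  · exact this hab.symm (Ne.symm hne) (by omega)
  apply hns
  apply sofic_of_evper hS (j := a) (d := b - a) (by omega)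
  intro k hk
  have key : ∀ m : ℕ, (a + m) ∈ S ↔ (b + m) ∈ S := by
    intro m
    rw [← vk_test hS hUnb a m, ← vk_test hS hUnb b m, hab]
  have := key (k - a)
  have e1 : a + (k - a) = k := by omega
  have e2 : b + (k - a) = k + (b - a) := by omega
  rwa [e1, e2] at this

lemma vinf_ne_vk {S : Set ℕ} (hS : S.Nonempty) (hns : ¬ Sofic (Sgap S)) (k : ℕ) :
    Vinf S ≠ Vk S k := by
  have hUnb := unb_of_nsofic hS hns
  intro he
  apply hns
  apply sofic_of_evper hS (j := k) (d := 1) (by omega)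
  intro m hm
  have h1 : (k + (m - k)) ∈ S := by
    rw [← vk_test hS hUnb, ← he]
    exact vinf_test hS hUnb _
  have h2 : (k + (m + 1 - k)) ∈ S := by
    rw [← vk_test hS hUnb, ← he]
    exact vinf_test hS hUnb _
  constructor
  · intro _
    have e : k + (m + 1 - k) = m + 1 := by omega
    rwa [e] at h2
  · intro _
    have e : k + (m - k) = m := by omega
    rwa [e] at h1


section Part2Lemmas

variable {A' B' : Type*}

/-- Translation by `n`. -/
def trans (n : ℤ) (x : ℤ → A') : ℤ → A' := fun i => x (i + n)

lemma limseq {α : Type*} [Finite α] (y : ℕ → ℤ → α) :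
    ∃ (x : ℤ → α) (φ : ℕ → ℕ), StrictMono φ ∧
      ∀ K : ℕ, ∃ N, ∀ k, N ≤ k → ∀ i : ℤ, |i| ≤ (K : ℤ) → y (φ k) i = x i := by
  letI : TopologicalSpace α := ⊥
  haveI : DiscreteTopology α := ⟨rfl⟩
  haveI : CompactSpace α := Finite.compactSpace
  obtain ⟨x, -, φ, hφ, hconv⟩ := IsCompact.tendsto_subseq (x := y)
    (isCompact_univ) (fun n => Set.mem_univ (y n))
  refine ⟨x, φ, hφ, ?_⟩
  intro K
  have hev : ∀ᶠ k in Filter.atTop, ∀ i ∈ Finset.Icc (-(K:ℤ)) K, y (φ k) i = x i := by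
    rw [Filter.eventually_all_finset]
    intro i _
    have hc := tendsto_pi_nhds.1 hconv i
    rw [nhds_discrete, Filter.tendsto_pure] at hc
    exact hc
  obtain ⟨N, hN⟩ := Filter.eventually_atTop.1 hev
  exact ⟨N, fun k hk i hi => hN k hk i (Finset.mem_Icc.2 (abs_le.1 hi))⟩

lemma cfgWord_congr {x x' : ℤ → A'} {i i' : ℤ} {k : ℕ}
    (h : ∀ t : ℕ, t < k → x (i + (t : ℤ)) = x' (i' + (t : ℤ))) :
    cfgWord x i k = cfgWord x' i' k := by
  apply List.ext_getElem (by simp [cfgWord])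
  intro n h1 h2
  simp only [cfgWord, List.getElem_ofFn]
  exact h n (by simpa [cfgWord] using h1)

lemma sgap_translate {S : Set ℕ} {x : ℤ → Bool} (hx : x ∈ Sgap S) (n : ℤ) :
    trans n x ∈ Sgap S := by
  intro i k
  have : cfgWord (trans n x) i k = cfgWord x (i + n) k := by
    apply cfgWord_congr
    intro t ht
    show x (i + t + n) = x (i + n + t)
    congr 1
    ring
  rw [this]
  exact hx (i + n) k

lemma sgap_closed {S : Set ℕ} {x : ℤ → Bool}
    (h : ∀ n : ℕ, ∃ y ∈ Sgap S, ∀ i : ℤ, |i| ≤ (n : ℤ) → y i = x i) : x ∈ Sgap S := by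
  intro i k
  obtain ⟨y, hy, hyx⟩ := h (i.natAbs + k)
  have : cfgWord x i k = cfgWord y i k := by
    apply cfgWord_congr
    intro t ht
    exact (hyx (i + t) (by
      rw [Int.abs_eq_natAbs]
      omega)).symm
  rw [this]
  exact hy i k

lemma subshift_translate {W : Set (ℤ → A')} (hW : IsSubshift W) {w : ℤ → A'}
    (hw : w ∈ W) (n : ℤ) : trans n w ∈ W := by
  obtain ⟨-, hsh, hshi, -⟩ := hW
  have hpos : ∀ (m : ℕ), ∀ w ∈ W, trans (m : ℤ) w ∈ W := by
    intro m
    induction m with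
    | zero =>
      intro w hw
      have : trans ((0 : ℕ) : ℤ) w = w := by funext i; simp [trans]
      rwa [this]
    | succ m ih =>
      intro w hw
      have : trans ((m + 1 : ℕ) : ℤ) w = trans (m : ℤ) (shiftMap w) := by
        funext i; simp [trans, shiftMap]; congr 1; push_cast; ring
      rw [this]
      exact ih _ (hsh w hw)
  have hneg : ∀ (m : ℕ), ∀ w ∈ W, trans (-(m : ℤ)) w ∈ W := by
    intro m
    induction m with
    | zero =>
      intro w hw
      have : trans (-((0 : ℕ) : ℤ)) w = w := by funext i; simp [trans]
      rwa [this]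
    | succ m ih =>
      intro w hw
      have : trans (-((m + 1 : ℕ) : ℤ)) w = trans (-(m : ℤ)) (shiftInvMap w) := by
        funext i; simp [trans, shiftInvMap]; congr 1; push_cast; ring
      rw [this]
      exact ih _ (hshi w hw)
  rcases Int.eq_nat_or_neg n with ⟨m, rfl | rfl⟩
  · exact hpos m w hw
  · exact hneg m w hw

lemma prod_translate {Y : Set (ℤ → B)} {Z : Set (ℤ → C)} (hY : IsSubshift Y)
    (hZ : IsSubshift Z) {u : ℤ → B × C} (hu : u ∈ prodShift Y Z) (n : ℤ) :
    trans n u ∈ prodShift Y Z := by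
  obtain ⟨h1, h2⟩ := hu
  constructor
  · have : (fun i => ((trans n u) i).1) = trans n (fun i => (u i).1) := rfl
    rw [this]
    exact subshift_translate hY h1 n
  · have : (fun i => ((trans n u) i).2) = trans n (fun i => (u i).2) := rfl
    rw [this]
    exact subshift_translate hZ h2 n

lemma sbc_local {X : Set (ℤ → A')} {F : (ℤ → A') → (ℤ → B')} {r : ℕ}
    {f : (Fin (2 * r + 1) → A') → B'}
    (hloc : ∀ x ∈ X, ∀ i : ℤ, F x i = f (fun k => x (i + ((k : ℕ) : ℤ) - (r : ℤ))))
    {x x' : ℤ → A'} (hx : x ∈ X) (hx' : x' ∈ X) (j : ℤ)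
    (h : ∀ m : ℤ, j - r ≤ m → m ≤ j + r → x m = x' m) : F x j = F x' j := by
  rw [hloc x hx j, hloc x' hx' j]
  congr 1
  funext k
  have hk : (k : ℕ) < 2 * r + 1 := k.2
  exact h _ (by omega) (by omega)

lemma sbc_translate {X : Set (ℤ → A')} {F : (ℤ → A') → (ℤ → B')} {r : ℕ}
    {f : (Fin (2 * r + 1) → A') → B'}
    (hloc : ∀ x ∈ X, ∀ i : ℤ, F x i = f (fun k => x (i + ((k : ℕ) : ℤ) - (r : ℤ))))
    {x : ℤ → A'} (hx : x ∈ X) {n : ℤ} (hxn : trans n x ∈ X) :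
    F (trans n x) = trans n (F x) := by
  funext i
  rw [hloc _ hxn i]
  show _ = F x (i + n)
  rw [hloc x hx (i + n)]
  congr 1
  funext k
  show x (i + (k : ℕ) - r + n) = x (i + n + (k : ℕ) - r)
  congr 1
  ring

lemma shift_fixed_const {w : ℤ → A'} (h : shiftMap w = w) : ∀ i, w i = w 0 := by
  have h' : ∀ i, w (i + 1) = w i := fun i => congrFun h i
  intro i
  induction i using Int.induction_on with
  | zero => rfl
  | succ n ih => rw [h' n]; exact ih
  | pred n ih =>
    have := h' (-(n : ℤ) - 1)
    simp only [sub_add_cancel] at this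
    rw [← this]
    exact ih

end Part2Lemmas


theorem sgap_direct_prime {S : Set ℕ} (hS : S.Nonempty) (hns : ¬ Sofic (Sgap S)) :
    DirectPrime (Sgap S) := by
  classical
  have hUnb := unb_of_nsofic hS hns
  intro B C hB hC Y Z hY hZ hconj
  haveI := hB
  haveI := hC
  by_contra hcon
  push_neg at hcon
  obtain ⟨hYnt, hZnt⟩ := hcon
  obtain ⟨F, ⟨r, f, hloc⟩, hInj, hIm⟩ := hconj
  have hpre : ∀ u : ℤ → B × C, u ∈ prodShift Y Z → ∃ x, x ∈ Sgap S ∧ F x = u := by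
    intro u hu
    rw [← hIm] at hu
    obtain ⟨x, hx, he⟩ := hu
    exact ⟨x, hx, he⟩
  set g : (ℤ → B × C) → (ℤ → Bool) := fun u =>
    if h : u ∈ prodShift Y Z then (hpre u h).choose else pt1 with hgdef
  have hgX : ∀ u ∈ prodShift Y Z, g u ∈ Sgap S := by
    intro u hu
    rw [hgdef]
    simp only [hu, dif_pos]
    exact (hpre u hu).choose_spec.1
  have hgF : ∀ u ∈ prodShift Y Z, F (g u) = u := by
    intro u hu
    rw [hgdef]
    simp only [hu, dif_pos]
    exact (hpre u hu).choose_spec.2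
  have hmemP : ∀ x ∈ Sgap S, F x ∈ prodShift Y Z := by
    intro x hx
    rw [← hIm]
    exact ⟨x, hx, rfl⟩
  have hguniq : ∀ x ∈ Sgap S, g (F x) = x := by
    intro x hx
    exact hInj (hgX _ (hmemP x hx)) hx (hgF _ (hmemP x hx))
  have hgtrans : ∀ u, u ∈ prodShift Y Z → ∀ n : ℤ, g (trans n u) = trans n (g u) := by
    intro u hu n
    have h1 := sbc_translate hloc (hgX u hu) (n := n) (sgap_translate (hgX u hu) n)
    rw [hgF u hu] at h1
    exact hInj (hgX _ (prod_translate hY hZ hu n)) (sgap_translate (hgX u hu) n)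
      (by rw [hgF _ (prod_translate hY hZ hu n), h1])
  -- fixed point analysis
  have hpt1 : pt1 ∈ Sgap S := pt1_mem hUnb
  set w₀ := F pt1 with hw₀
  have hw₀P : w₀ ∈ prodShift Y Z := hmemP pt1 hpt1
  have hw₀fix : shiftMap w₀ = w₀ := by
    have e1 : trans 1 pt1 = pt1 := by funext i; rfl
    have h1 := sbc_translate hloc hpt1 (n := 1) (by rw [e1]; exact hpt1)
    rw [e1] at h1
    exact h1.symm
  have hw₀c : ∀ i, w₀ i = w₀ 0 := shift_fixed_const hw₀fix
  set b₀ := (w₀ 0).1 with hb₀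
  set c₀ := (w₀ 0).2 with hc₀
  set pbar : ℤ → B := fun _ => b₀ with hpbar
  set qbar : ℤ → C := fun _ => c₀ with hqbar
  have hw₀e : ∀ i, w₀ i = (b₀, c₀) := by
    intro i
    rw [hw₀c i]
  have hpY : pbar ∈ Y := by
    have h1 := hw₀P.1
    have e : (fun i => (w₀ i).1) = pbar := by
      funext i
      rw [hw₀c i]
    rwa [e] at h1
  have hqZ : qbar ∈ Z := by
    have h1 := hw₀P.2
    have e : (fun i => (w₀ i).2) = qbar := by
      funext i
      rw [hw₀c i]
    rwa [e] at h1
  have hgw₀ : g w₀ = pt1 := hguniq pt1 hpt1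
  -- case analysis on homoclinic points
  by_cases hHY : ∃ y ∈ Y, (∃ K : ℕ, ∀ i : ℤ, (K : ℤ) < |i| → y i = b₀) ∧ y ≠ pbar
  case neg =>
    -- Y has no nontrivial homoclinic point: every F-image has constant first coordinate
    push_neg at hHY
    have hfst : ∀ x ∈ Sgap S, ∀ i : ℤ, (F x i).1 = b₀ := by
      intro x hx i
      set K := i.natAbs + r with hK
      set x' : ℤ → Bool := fun m => if m.natAbs ≤ K then x m else true with hx'def
      have hx' : x' ∈ Sgap S := by
        apply mem_of_good
        · intro a b hab ha hb hbet
          have haz : x a = false ∧ a.natAbs ≤ K := by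
            by_cases h : a.natAbs ≤ K
            · rw [hx'def] at ha
              simp only [h, if_pos] at ha
              exact ⟨ha, h⟩
            · rw [hx'def] at ha
              simp only [h, if_neg] at ha
              simp at ha
          have hbz : x b = false ∧ b.natAbs ≤ K := by
            by_cases h : b.natAbs ≤ K
            · rw [hx'def] at hb
              simp only [h, if_pos] at hb
              exact ⟨hb, h⟩
            · rw [hx'def] at hb
              simp only [h, if_neg] at hb
              simp at hb
          apply gaps_of_mem hx a b hab haz.1 hbz.1
          intro m hm1 hm2
          have hmK : m.natAbs ≤ K := by
            have := haz.2
            have := hbz.2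
            omega
          have := hbet m hm1 hm2
          rw [hx'def] at this
          simpa only [hmK, if_pos] using this
        · exact runs_of_unb hUnb _
      have he1 : F x i = F x' i := by
        apply sbc_local hloc hx hx' i
        intro m h1 h2
        have hmK : m.natAbs ≤ K := by rw [hK]; omega
        rw [hx'def]
        simp only [hmK, if_pos]
      have hy'Y : (fun j => (F x' j).1) ∈ Y := (hmemP x' hx').1
      have hyeq : (fun j => (F x' j).1) = pbar := by
        apply hHY _ hy'Y
        refine ⟨K + r, ?_⟩
        intro j hj
        have hjn : (K : ℤ) + r < |j| := by push_cast at hj ⊢; omega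
        have he2 : F x' j = F pt1 j := by
          apply sbc_local hloc hx' hpt1 j
          intro m h1 h2
          have hm : ¬ m.natAbs ≤ K := by
            rcases abs_cases j with ⟨he, -⟩ | ⟨he, -⟩ <;> omega
          rw [hx'def]
          simp only [hm, if_neg]
          rfl
        show (F x' j).1 = b₀
        rw [he2]
        show (w₀ j).1 = b₀
        rw [hw₀c j]
      rw [he1]
      exact congrFun hyeq i
    have hYs : ∃ y ∈ Y, y ≠ pbar := by
      by_contra hcY
      push_neg at hcY
      exact hYnt pbar (Set.eq_singleton_iff_unique_mem.2 ⟨hpY, hcY⟩)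
    obtain ⟨y', hy'Y, hy'ne⟩ := hYs
    have huP : (fun i : ℤ => (y' i, c₀)) ∈ prodShift Y Z := ⟨hy'Y, hqZ⟩
    apply hy'ne
    funext i
    have h1 := hfst (g _) (hgX _ huP) i
    rw [hgF _ huP] at h1
    exact h1
  by_cases hHZ : ∃ z ∈ Z, (∃ K : ℕ, ∀ i : ℤ, (K : ℤ) < |i| → z i = c₀) ∧ z ≠ qbar
  case neg =>
    push_neg at hHZ
    have hsnd : ∀ x ∈ Sgap S, ∀ i : ℤ, (F x i).2 = c₀ := by
      intro x hx i
      set K := i.natAbs + r with hK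
      set x' : ℤ → Bool := fun m => if m.natAbs ≤ K then x m else true with hx'def
      have hx' : x' ∈ Sgap S := by
        apply mem_of_good
        · intro a b hab ha hb hbet
          have haz : x a = false ∧ a.natAbs ≤ K := by
            by_cases h : a.natAbs ≤ K
            · rw [hx'def] at ha
              simp only [h, if_pos] at ha
              exact ⟨ha, h⟩
            · rw [hx'def] at ha
              simp only [h, if_neg] at ha
              simp at ha
          have hbz : x b = false ∧ b.natAbs ≤ K := by
            by_cases h : b.natAbs ≤ K
            · rw [hx'def] at hb
              simp only [h, if_pos] at hb
              exact ⟨hb, h⟩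
            · rw [hx'def] at hb
              simp only [h, if_neg] at hb
              simp at hb
          apply gaps_of_mem hx a b hab haz.1 hbz.1
          intro m hm1 hm2
          have hmK : m.natAbs ≤ K := by
            have := haz.2
            have := hbz.2
            omega
          have := hbet m hm1 hm2
          rw [hx'def] at this
          simpa only [hmK, if_pos] using this
        · exact runs_of_unb hUnb _
      have he1 : F x i = F x' i := by
        apply sbc_local hloc hx hx' i
        intro m h1 h2
        have hmK : m.natAbs ≤ K := by rw [hK]; omega
        rw [hx'def]
        simp only [hmK, if_pos]
      have hz'Z : (fun j => (F x' j).2) ∈ Z := (hmemP x' hx').2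
      have hzeq : (fun j => (F x' j).2) = qbar := by
        apply hHZ _ hz'Z
        refine ⟨K + r, ?_⟩
        intro j hj
        have hjn : (K : ℤ) + r < |j| := by push_cast at hj ⊢; omega
        have he2 : F x' j = F pt1 j := by
          apply sbc_local hloc hx' hpt1 j
          intro m h1 h2
          have hm : ¬ m.natAbs ≤ K := by
            rcases abs_cases j with ⟨he, -⟩ | ⟨he, -⟩ <;> omega
          rw [hx'def]
          simp only [hm, if_neg]
          rfl
        show (F x' j).2 = c₀
        rw [he2]
        show (w₀ j).2 = c₀
        rw [hw₀c j]
      rw [he1]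
      exact congrFun hzeq i
    have hZs : ∃ z ∈ Z, z ≠ qbar := by
      by_contra hcZ
      push_neg at hcZ
      exact hZnt qbar (Set.eq_singleton_iff_unique_mem.2 ⟨hqZ, hcZ⟩)
    obtain ⟨z', hz'Z, hz'ne⟩ := hZs
    have huP : (fun i : ℤ => (b₀, z' i)) ∈ prodShift Y Z := ⟨hpY, hz'Z⟩
    apply hz'ne
    funext i
    have h1 := hsnd (g _) (hgX _ huP) i
    rw [hgF _ huP] at h1
    exact h1
  -- main case: both factors have nontrivial homoclinic points
  obtain ⟨yh, hyhY, ⟨Ky, hyhb⟩, hyhne⟩ := hHY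
  obtain ⟨zh, hzhZ, ⟨Kz, hzhb⟩, hzhne⟩ := hHZ
  have hyhb' : ∀ i : ℤ, ((Ky : ℤ) < i ∨ i < -(Ky : ℤ)) → yh i = b₀ := by
    intro i hi
    apply hyhb
    rcases hi with h | h
    · exact lt_of_lt_of_le h (le_abs_self i)
    · exact lt_of_lt_of_le (by omega) (neg_le_abs i)
  have hzhb' : ∀ i : ℤ, ((Kz : ℤ) < i ∨ i < -(Kz : ℤ)) → zh i = c₀ := by
    intro i hi
    apply hzhb
    rcases hi with h | h
    · exact lt_of_lt_of_le h (le_abs_self i)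
    · exact lt_of_lt_of_le (by omega) (neg_le_abs i)
  -- inverse locality (Curtis–Hedlund via compactness)
  have hINV : ∃ R : ℕ, ∀ u v : ℤ → B × C, u ∈ prodShift Y Z → v ∈ prodShift Y Z →
      ∀ j : ℤ, (∀ i : ℤ, |i - j| ≤ (R : ℤ) → u i = v i) → g u j = g v j := by
    by_contra hcI
    push_neg at hcI
    have hc0 : ∀ R : ℕ, ∃ u v, u ∈ prodShift Y Z ∧ v ∈ prodShift Y Z ∧
        (∀ i : ℤ, |i| ≤ (R : ℤ) → u i = v i) ∧ g u 0 ≠ g v 0 := by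
      intro R
      obtain ⟨u, v, hu, hv, j, hw, hne⟩ := hcI R
      refine ⟨trans j u, trans j v, prod_translate hY hZ hu j,
        prod_translate hY hZ hv j, ?_, ?_⟩
      · intro i hi
        show u (i + j) = v (i + j)
        apply hw
        rw [show i + j - j = i by ring]
        exact hi
      · rw [hgtrans u hu j, hgtrans v hv j]
        show g u (0 + j) ≠ g v (0 + j)
        rw [zero_add]
        exact hne
    choose uu vv huuP hvvP hagree hne using hc0
    obtain ⟨xs, φ, hφ, hwin⟩ := limseq (fun R i => (uu R i, vv R i, g (uu R) i, g (vv R) i))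
    set ustar : ℤ → B × C := fun i => (xs i).1 with hustar
    set vstar : ℤ → B × C := fun i => (xs i).2.1 with hvstar
    set astar : ℤ → Bool := fun i => (xs i).2.2.1 with hastar
    set bstar : ℤ → Bool := fun i => (xs i).2.2.2 with hbstar
    have hφge : ∀ k, k ≤ φ k := fun k => hφ.le_apply
    have huv : ustar = vstar := by
      funext i
      obtain ⟨N, hN⟩ := hwin i.natAbs
      set k := max N i.natAbs with hkdef
      have h1 := hN k (le_max_left _ _) i (by
        rcases abs_cases i with ⟨he, -⟩ | ⟨he, -⟩ <;> omega)
      have h2 : uu (φ k) i = vv (φ k) i := by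
        apply hagree (φ k) i
        have : i.natAbs ≤ φ k := le_trans (le_max_right N _) (hφge k)
        rcases abs_cases i with ⟨he, -⟩ | ⟨he, -⟩ <;> omega
      have e1 : uu (φ k) i = ustar i := congrArg (fun p => p.1) h1
      have e2 : vv (φ k) i = vstar i := congrArg (fun p => p.2.1) h1
      rw [← e1, ← e2]
      exact h2
    have hastarX : astar ∈ Sgap S := by
      apply sgap_closed
      intro n
      obtain ⟨N, hN⟩ := hwin n
      refine ⟨g (uu (φ N)), hgX _ (huuP (φ N)), ?_⟩
      intro i hi
      exact congrArg (fun p => p.2.2.1) (hN N le_rfl i hi)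
    have hbstarX : bstar ∈ Sgap S := by
      apply sgap_closed
      intro n
      obtain ⟨N, hN⟩ := hwin n
      refine ⟨g (vv (φ N)), hgX _ (hvvP (φ N)), ?_⟩
      intro i hi
      exact congrArg (fun p => p.2.2.2) (hN N le_rfl i hi)
    have hFa : F astar = ustar := by
      funext j
      obtain ⟨N, hN⟩ := hwin (j.natAbs + r)
      have he1 : F astar j = F (g (uu (φ N))) j := by
        apply sbc_local hloc hastarX (hgX _ (huuP (φ N))) j
        intro m h1 h2
        exact (congrArg (fun p => p.2.2.1)
          (hN N le_rfl m (by rcases abs_cases m with ⟨he, -⟩ | ⟨he, -⟩ <;> omega))).symm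
      rw [he1, hgF _ (huuP (φ N))]
      exact congrArg (fun p => p.1) (hN N le_rfl j (by
        rcases abs_cases j with ⟨he, -⟩ | ⟨he, -⟩ <;> omega))
    have hFb : F bstar = vstar := by
      funext j
      obtain ⟨N, hN⟩ := hwin (j.natAbs + r)
      have he1 : F bstar j = F (g (vv (φ N))) j := by
        apply sbc_local hloc hbstarX (hgX _ (hvvP (φ N))) j
        intro m h1 h2
        exact (congrArg (fun p => p.2.2.2)
          (hN N le_rfl m (by rcases abs_cases m with ⟨he, -⟩ | ⟨he, -⟩ <;> omega))).symm
      rw [he1, hgF _ (hvvP (φ N))]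
      exact congrArg (fun p => p.2.1) (hN N le_rfl j (by
        rcases abs_cases j with ⟨he, -⟩ | ⟨he, -⟩ <;> omega))
    have hab : astar = bstar := hInj hastarX hbstarX (by rw [hFa, hFb, huv])
    obtain ⟨N, hN⟩ := hwin 0
    have h1 := hN N le_rfl 0 (by simp)
    have e1 : g (uu (φ N)) 0 = astar 0 := congrArg (fun p => p.2.2.1) h1
    have e2 : g (vv (φ N)) 0 = bstar 0 := congrArg (fun p => p.2.2.2) h1
    apply hne (φ N)
    rw [e1, e2, hab]
  obtain ⟨R, hR⟩ := hINV
  -- cluster argument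
  have huAP : (fun i : ℤ => (yh i, c₀)) ∈ prodShift Y Z := ⟨hyhY, hqZ⟩
  set uA : ℤ → B × C := fun i => (yh i, c₀) with huAdef
  set Av := g uA with hAvdef
  have huCP : (fun i : ℤ => (b₀, zh i)) ∈ prodShift Y Z := ⟨hpY, hzhZ⟩
  set uC : ℤ → B × C := fun i => (b₀, zh i) with huCdef
  set Cv := g uC with hCvdef
  have hAtail : ∀ j : ℤ, ((Ky : ℤ) + R < j ∨ j < -((Ky : ℤ) + R)) → Av j = true := by
    intro j hj
    have h1 : Av j = g w₀ j := by
      apply hR uA w₀ huAP hw₀P j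
      intro i hi
      rcases abs_le.1 hi with ⟨ha, hb⟩
      have : yh i = b₀ := by
        apply hyhb'
        rcases hj with h | h
        · left; omega
        · right; omega
      rw [hw₀e i, huAdef]
      simp [this]
    rw [h1, hgw₀]
    rfl
  have hCtail : ∀ j : ℤ, ((Kz : ℤ) + R < j ∨ j < -((Kz : ℤ) + R)) → Cv j = true := by
    intro j hj
    have h1 : Cv j = g w₀ j := by
      apply hR uC w₀ huCP hw₀P j
      intro i hi
      rcases abs_le.1 hi with ⟨ha, hb⟩
      have : zh i = c₀ := by
        apply hzhb'
        rcases hj with h | h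
        · left; omega
        · right; omega
      rw [hw₀e i, huCdef]
      simp [this]
    rw [h1, hgw₀]
    rfl
  have hAne : Av ≠ pt1 := by
    intro he
    apply hyhne
    have h2 : F (g uA) = uA := hgF uA huAP
    rw [← hAvdef, he] at h2
    have h1 : uA = w₀ := h2.symm.trans hw₀.symm
    funext i
    have h3 := congrFun h1 i
    rw [hw₀e i] at h3
    exact congrArg Prod.fst h3
  have hCne : Cv ≠ pt1 := by
    intro he
    apply hzhne
    have h2 : F (g uC) = uC := hgF uC huCP
    rw [← hCvdef, he] at h2
    have h1 : uC = w₀ := h2.symm.trans hw₀.symm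
    funext i
    have h3 := congrFun h1 i
    rw [hw₀e i] at h3
    exact congrArg Prod.snd h3
  have hAzero : ∃ j, Av j = false := by
    by_contra hcA
    push_neg at hcA
    exact hAne (funext fun j => bne_false (hcA j))
  have hCzero : ∃ j, Cv j = false := by
    by_contra hcC
    push_neg at hcC
    exact hCne (funext fun j => bne_false (hcC j))
  obtain ⟨α, hαf, hαmin⟩ := Int.exists_least_of_bdd
    (P := fun j => Av j = false)
    ⟨-((Ky : ℤ) + R), by
      intro z hz
      by_contra hc
      push_neg at hc
      rw [hAtail z (Or.inr (by omega))] at hz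
      simp at hz⟩ hAzero
  obtain ⟨γ, hγf, hγmax⟩ := Int.exists_greatest_of_bdd
    (P := fun j => Cv j = false)
    ⟨(Kz : ℤ) + R, by
      intro z hz
      by_contra hc
      push_neg at hc
      rw [hCtail z (Or.inl (by omega))] at hz
      simp at hz⟩ hCzero
  have hαb : -((Ky : ℤ) + R) ≤ α ∧ α ≤ (Ky : ℤ) + R := by
    constructor
    · by_contra hc
      push_neg at hc
      rw [hAtail α (Or.inr hc)] at hαf
      simp at hαf
    · by_contra hc
      push_neg at hc
      rw [hAtail α (Or.inl hc)] at hαf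
      simp at hαf
  have hγb : -((Kz : ℤ) + R) ≤ γ ∧ γ ≤ (Kz : ℤ) + R := by
    constructor
    · by_contra hc
      push_neg at hc
      rw [hCtail γ (Or.inr hc)] at hγf
      simp at hγf
    · by_contra hc
      push_neg at hc
      rw [hCtail γ (Or.inl hc)] at hγf
      simp at hγf
  have hmain : ∀ N : ℤ, (Ky : ℤ) + Kz + 2*R + 2 ≤ N → (N + α - γ - 1).toNat ∈ S := by
    intro N hNb
    have huBP : (fun i : ℤ => (yh (i - N), zh i)) ∈ prodShift Y Z := by
      refine ⟨?_, ?_⟩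
      · show (fun i : ℤ => yh (i - N)) ∈ Y
        have e : (fun i : ℤ => yh (i - N)) = trans (-N) yh := by
          funext i
          show yh (i - N) = yh (i + -N)
          congr 1
        rw [e]
        exact subshift_translate hY hyhY (-N)
      · show (fun i : ℤ => zh i) ∈ Z
        exact hzhZ
    set uB : ℤ → B × C := fun i => (yh (i - N), zh i) with huBdef
    set Bv := g uB with hBvdef
    have hf1 : ∀ j : ℤ, j ≤ N - R - Ky - 1 → Bv j = Cv j := by
      intro j hj
      apply hR uB uC huBP huCP j
      intro i hi
      rcases abs_le.1 hi with ⟨h1, h2⟩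
      have : yh (i - N) = b₀ := hyhb' _ (Or.inr (by omega))
      rw [huBdef, huCdef]
      simp [this]
    have hf2 : ∀ j : ℤ, (Kz : ℤ) + R + 1 ≤ j → Bv j = Av (j - N) := by
      intro j hj
      have e1 : Av (j - N) = trans (-N) Av j := by
        show _ = Av (j + -N)
        congr 1
      rw [e1, ← hgtrans uA huAP (-N)]
      apply hR uB (trans (-N) uA) huBP (prod_translate hY hZ huAP (-N)) j
      intro i hi
      rcases abs_le.1 hi with ⟨h1, h2⟩
      have : zh i = c₀ := hzhb' _ (Or.inl (by omega))
      show (yh (i - N), zh i) = (yh (i + -N), c₀)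
      rw [this, show i - N = i + -N by ring]
    have hBX : Bv ∈ Sgap S := hgX _ huBP
    have hgap := gaps_of_mem hBX γ (N + α) (by omega)
      (by rw [hf1 γ (by omega)]; exact hγf)
      (by rw [hf2 (N + α) (by omega), show N + α - N = α by ring]; exact hαf)
      (by intro m hm1 hm2
          by_cases hm : m ≤ N - R - Ky - 1
          · rw [hf1 m hm]
            apply bne_false
            intro hc
            exact absurd (hγmax m hc) (by omega)
          · rw [hf2 m (by omega)]
            apply bne_false
            intro hc
            exact absurd (hαmin _ hc) (by omega))
    exact hgap
  apply hns
  set M : ℕ := 4*Ky + 4*Kz + 8*R + 8 with hM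
  apply sofic_of_evper hS (j := M) (d := 1) (by omega)
  intro k hk
  have hkS : ∀ k', M ≤ k' → k' ∈ S := by
    intro k' hk'
    have h1 := hmain ((k' : ℤ) + 1 + γ - α) (by push_cast; omega)
    have e : ((k' : ℤ) + 1 + γ - α + α - γ - 1).toNat = k' := by omega
    rwa [e] at h1
  constructor
  · intro _
    exact hkS (k + 1) (by omega)
  · intro _
    exact hkS k hk


section Part1

/-- Configuration with zeros at `-1` and `-2-s`. -/
def xk2 (s : ℕ) : ℤ → Bool := fun i => decide (i ≠ -1 ∧ i ≠ -2 - (s : ℤ))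

lemma xk2_mem {S : Set ℕ} (hUnb : Unb S) {s : ℕ} (hs : s ∈ S) : xk2 s ∈ Sgap S := by
  apply mem_of_good
  · intro i j hij hi hj hbet
    simp only [xk2, decide_eq_false_iff_not, not_and, not_not, not_forall] at hi hj
    have hiv : i = -1 ∨ i = -2 - (s : ℤ) := by tauto
    have hjv : j = -1 ∨ j = -2 - (s : ℤ) := by tauto
    have : i = -2 - (s : ℤ) ∧ j = -1 := by omega
    obtain ⟨rfl, rfl⟩ := this
    have e : (-1 - (-2 - (s : ℤ)) - 1).toNat = s := by omega
    rw [e]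
    exact hs
  · exact runs_of_unb hUnb _

lemma extendRay_xk_true (k : ℕ) :
    extendRay (leftRay (xk k)) true = leftRay (xk (k + 1)) := by
  funext n
  rcases n with _ | n
  · rw [show extendRay (leftRay (xk k)) true 0 = true from rfl]
    exact (leftRay_xk_ne (k+1) 0 (by omega)).symm
  · show leftRay (xk k) n = leftRay (xk (k+1)) (n+1)
    by_cases h : n = k
    · subst h
      rw [leftRay_xk_self]
      exact (leftRay_xk_self (n+1)).symm
    · rw [leftRay_xk_ne k n h, leftRay_xk_ne (k+1) (n+1) (by omega)]

lemma leftRay_xk2_zero (s : ℕ) : leftRay (xk2 s) 0 = false := by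
  simp [leftRay, xk2]

lemma extendRay_xk_false (s : ℕ) :
    extendRay (leftRay (xk s)) false = leftRay (xk2 s) := by
  funext n
  rcases n with _ | n
  · rw [show extendRay (leftRay (xk s)) false 0 = false from rfl]
    exact (leftRay_xk2_zero s).symm
  · show leftRay (xk s) n = leftRay (xk2 s) (n+1)
    show xk s (-1 - (n : ℤ)) = xk2 s (-1 - ((n+1 : ℕ) : ℤ))
    simp only [xk, xk2, decide_eq_decide]
    push_cast
    omega

lemma foll_xk2 {S : Set ℕ} (hS : S.Nonempty) (hUnb : Unb S) {s : ℕ} (hs : s ∈ S) :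
    foll (Sgap S) (leftRay (xk2 s)) = Vk S 0 :=
  foll_eq_vk hS hUnb (xk2_mem hUnb hs) (leftRay_xk2_zero s) (fun n hn => by omega)

lemma kedge_one {S : Set ℕ} (hUnb : Unb S) (k : ℕ) :
    KEdge (Sgap S) (Vk S k) true (Vk S (k + 1)) := by
  refine ⟨leftRay (xk k), ⟨xk k, xk_mem hUnb k, rfl⟩, ?_, rfl, ?_⟩
  · rw [extendRay_xk_true]
    exact ⟨xk (k+1), xk_mem hUnb (k+1), rfl⟩
  · rw [extendRay_xk_true]
    rfl

lemma kedge_zero {S : Set ℕ} (hS : S.Nonempty) (hUnb : Unb S) {s : ℕ} (hs : s ∈ S) :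
    KEdge (Sgap S) (Vk S s) false (Vk S 0) := by
  refine ⟨leftRay (xk s), ⟨xk s, xk_mem hUnb s, rfl⟩, ?_, rfl, ?_⟩
  · rw [extendRay_xk_false]
    exact ⟨xk2 s, xk2_mem hUnb hs, rfl⟩
  · rw [extendRay_xk_false]
    exact (foll_xk2 hS hUnb hs).symm

lemma kreach_climb {S : Set ℕ} (hUnb : Unb S) (a b : ℕ) (hab : a ≤ b) :
    KReach (Sgap S) (Vk S a) (Vk S b) := by
  induction b, hab using Nat.le_induction with
  | base => exact Relation.ReflTransGen.refl
  | succ b hab ih =>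
    exact Relation.ReflTransGen.tail ih ⟨true, kedge_one hUnb b⟩

lemma follW_eq {S : Set ℕ} (hS : S.Nonempty) (hUnb : Unb S) :
    follW (Sgap S) [false] = Vk S 0 := by
  ext r
  show wordThen [false] r ∈ RightRays (Sgap S) ↔ glue (leftRay (xk 0)) r ∈ Sgap S
  have hwt0 : wordThen [false] r 0 = false := rfl
  have hwts : ∀ n : ℕ, wordThen [false] r (n + 1) = r n := by
    intro n
    show (if h : n + 1 < 1 then _ else r (n + 1 - 1)) = r n
    rw [dif_neg (by omega)]
    simp
  constructor
  · rintro ⟨x, hx, hrr⟩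
    have hxv : ∀ n : ℕ, x (n : ℤ) = wordThen [false] r n := fun n => congrFun hrr n
    set H : ℤ → Bool := fun i => if i ≤ -2 then true else x (i + 1) with hH
    have hHmem : H ∈ Sgap S := by
      apply mem_of_good
      · intro i j hij hi hj hbet
        have hiz : ¬ i ≤ -2 ∧ x (i+1) = false := by
          by_cases h : i ≤ -2
          · rw [hH] at hi; simp only [h, if_pos] at hi; simp at hi
          · rw [hH] at hi; simp only [h, if_neg] at hi; exact ⟨h, hi⟩
        have hjz : ¬ j ≤ -2 ∧ x (j+1) = false := by
          by_cases h : j ≤ -2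
          · rw [hH] at hj; simp only [h, if_pos] at hj; simp at hj
          · rw [hH] at hj; simp only [h, if_neg] at hj; exact ⟨h, hj⟩
        have key := gaps_of_mem hx (i+1) (j+1) (by omega) hiz.2 hjz.2 (by
          intro m hm1 hm2
          have := hbet (m - 1) (by omega) (by omega)
          rw [hH] at this
          simp only [show ¬ (m - 1 ≤ -2) by omega, if_neg] at this
          rwa [show m - 1 + 1 = m by ring] at this)
        have e : (j + 1 - (i + 1) - 1).toNat = (j - i - 1).toNat := by omega
        rwa [e] at key
      · exact runs_of_unb hUnb _
    have hHeq : glue (leftRay (xk 0)) r = H := by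
      funext i
      by_cases h1 : i ≤ -2
      · rw [glue_leftRay_neg _ _ (by omega), hH]
        simp only [h1, if_pos]
        simp only [xk, decide_eq_true_iff]
        omega
      · by_cases h2 : i = -1
        · subst h2
          rw [glue_leftRay_neg _ _ (by omega), hH]
          simp only [show ¬ (-1 : ℤ) ≤ -2 by omega, if_neg]
          show xk 0 (-1) = x 0
          have := hxv 0
          rw [hwt0] at this
          rw [show ((0:ℕ):ℤ) = (0:ℤ) from rfl] at this
          rw [this]
          rfl
        · have h3 : 0 ≤ i := by omega
          rw [glue_nat _ _ h3, hH]
          simp only [show ¬ i ≤ -2 by omega, if_neg]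
          have := hxv (i.toNat + 1)
          rw [hwts i.toNat] at this
          rw [show ((i.toNat + 1 : ℕ) : ℤ) = i + 1 by omega] at this
          rw [this]
          simp
    rw [hHeq]
    exact hHmem
  · intro h
    refine ⟨trans (-1) (glue (leftRay (xk 0)) r), sgap_translate h (-1), ?_⟩
    funext n
    show glue (leftRay (xk 0)) r ((n : ℤ) + -1) = wordThen [false] r n
    rcases n with _ | n
    · rw [hwt0]
      rw [glue_leftRay_neg _ _ (by omega)]
      rfl
    · rw [hwts n]
      rw [glue_nat _ _ (by push_cast; omega)]
      congr 1
      push_cast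
      omega

lemma fvert {S : Set ℕ} (hS : S.Nonempty) (hUnb : Unb S) (k : ℕ) :
    FVertex (Sgap S) [false] (Vk S k) := by
  refine ⟨⟨leftRay (xk k), ⟨xk k, xk_mem hUnb k, rfl⟩, rfl⟩, ?_, ?_⟩
  · rw [follW_eq hS hUnb]
    exact kreach_climb hUnb 0 k (Nat.zero_le k)
  · rw [follW_eq hS hUnb]
    obtain ⟨s, hsS, hks⟩ := hUnb k
    exact Relation.ReflTransGen.tail (kreach_climb hUnb k s hks)
      ⟨false, kedge_zero hS hUnb hsS⟩

lemma kreach_from_vk {S : Set ℕ} (hS : S.Nonempty) (hns : ¬ Sofic (Sgap S))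
    {v w : Set (ℕ → Bool)} (hreach : KReach (Sgap S) v w) {k : ℕ} (hv : v = Vk S k) :
    ∃ k', w = Vk S k' := by
  have hUnb := unb_of_nsofic hS hns
  induction hreach with
  | refl => exact ⟨k, hv⟩
  | tail hr hstep ih =>
    obtain ⟨k₁, rfl⟩ := ih
    obtain ⟨a, l, ⟨x, hx, rfl⟩, ⟨x₂, hx₂, hlr₂⟩, hu, hv'⟩ := hstep
    by_cases hz : ∃ n, leftRay x n = false
    · set k₀ := Nat.find hz with hk₀
      have hspec : leftRay x k₀ = false := Nat.find_spec hz
      have hmin : ∀ n, n < k₀ → leftRay x n = true := fun n hn =>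
        bne_false (Nat.find_min hz hn)
      rcases a with _ | _
      · refine ⟨0, ?_⟩
        rw [hv', ← hlr₂]
        exact foll_eq_vk hS hUnb hx₂ (by rw [hlr₂]; rfl) (fun n hn => by omega)
      · refine ⟨k₀ + 1, ?_⟩
        rw [hv', ← hlr₂]
        apply foll_eq_vk hS hUnb hx₂
        · rw [hlr₂]
          show leftRay x (k₀ + 1 - 1) = false
          simpa using hspec
        · intro n hn
          rw [hlr₂]
          rcases n with _ | n
          · rfl
          · show leftRay x (n + 1 - 1) = true
            simpa using hmin n (by omega)
    · push_neg at hz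
      exfalso
      have hall : ∀ n, leftRay x n = true := fun n => bne_false (hz n)
      rw [foll_eq_vinf hS hUnb hx hall] at hu
      exact vinf_ne_vk hS hns k₁ hu.symm

lemma edge_struct {S : Set ℕ} (hS : S.Nonempty) (hns : ¬ Sofic (Sgap S))
    (e : FischerE (Sgap S) [false]) :
    ∃ k : ℕ, e.1.1 = Vk S k ∧
      ((e.1.2.1 = true ∧ e.1.2.2 = Vk S (k + 1)) ∨
       (e.1.2.1 = false ∧ k ∈ S ∧ e.1.2.2 = Vk S 0)) := by
  have hUnb := unb_of_nsofic hS hns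
  obtain ⟨hFu, hFv, hE⟩ := e.2
  obtain ⟨hKu, hRu, -⟩ := hFu
  rw [follW_eq hS hUnb] at hRu
  obtain ⟨k, hk⟩ := kreach_from_vk hS hns hRu rfl
  refine ⟨k, hk, ?_⟩
  obtain ⟨l, ⟨x, hx, rfl⟩, ⟨x₂, hx₂, hlr₂⟩, hu, hv'⟩ := hE
  by_cases hz : ∃ n, leftRay x n = false
  · set k₀ := Nat.find hz with hk₀def
    have hspec : leftRay x k₀ = false := Nat.find_spec hz
    have hmin : ∀ n, n < k₀ → leftRay x n = true := fun n hn =>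
      bne_false (Nat.find_min hz hn)
    have hk₀k : k₀ = k := by
      apply vk_inj hS hns
      rw [← foll_eq_vk hS hUnb hx hspec hmin, ← hu, hk]
    rcases hcase : e.1.2.1 with _ | _
    · rw [hcase] at hlr₂ hv'
      right
      refine ⟨rfl, ?_, ?_⟩
      · -- k ∈ S
        have hz1 : x₂ (-1) = false := by
          have h0 := congrFun hlr₂ 0
          exact h0
        have hz2 : x₂ (-2 - (k : ℤ)) = false := by
          have h0 := congrFun hlr₂ (k + 1)
          have h1 : leftRay x₂ (k + 1) = false := by
            rw [h0]
            show leftRay x (k + 1 - 1) = false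
            simp only [Nat.add_sub_cancel]
            rw [← hk₀k]
            exact hspec
          have e3 : (-2 - (k : ℤ)) = -1 - ((k + 1 : ℕ) : ℤ) := by push_cast; ring
          rw [e3]
          exact h1
        have key := gaps_of_mem hx₂ (-2 - (k : ℤ)) (-1) (by omega) hz2 hz1 (by
          intro m hm1 hm2
          have hmn : m = -1 - (((-1 - m).toNat : ℕ) : ℤ) := by omega
          rw [hmn]
          have h0 := congrFun hlr₂ (-1 - m).toNat
          show leftRay x₂ (-1 - m).toNat = true
          rw [h0]
          obtain ⟨n', hn'⟩ : ∃ n', (-1 - m).toNat = n' + 1 := ⟨(-1 - m).toNat - 1, by omega⟩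
          rw [hn']
          show leftRay x (n' + 1 - 1) = true
          simp only [Nat.add_sub_cancel]
          apply hmin
          omega)
        have e2 : ((-1 : ℤ) - (-2 - (k : ℤ)) - 1).toNat = k := by omega
        rwa [e2] at key
      · rw [hv', ← hlr₂]
        exact foll_eq_vk hS hUnb hx₂ (by rw [hlr₂]; rfl) (fun n hn => by omega)
    · rw [hcase] at hlr₂ hv'
      left
      refine ⟨rfl, ?_⟩
      rw [hv', ← hlr₂, ← hk₀k]
      apply foll_eq_vk hS hUnb hx₂
      · rw [hlr₂]
        show leftRay x (k₀ + 1 - 1) = false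
        simpa using hspec
      · intro n hn
        rw [hlr₂]
        rcases n with _ | n
        · rfl
        · show leftRay x (n + 1 - 1) = true
          simpa using hmin n (by omega)
  · push_neg at hz
    exfalso
    have hall : ∀ n, leftRay x n = true := fun n => bne_false (hz n)
    rw [foll_eq_vinf hS hUnb hx hall] at hu
    exact vinf_ne_vk hS hns k (hu.symm.trans hk)

lemma bne_true {b : Bool} (h : ¬ b = true) : b = false := by
  cases b <;> simp_all

theorem no_evgeo {S : Set ℕ} (hS : S.Nonempty) (hns : ¬ Sofic (Sgap S)) :
    ¬ HasEvGeoProxPair (FischerGraph (Sgap S) [false]) := by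
  have hUnb := unb_of_nsofic hS hns
  rintro ⟨x, y, hbx, hby, ⟨ix, hgx⟩, ⟨iy, hgy⟩, hp1, hp2⟩
  set G := FischerGraph (Sgap S) [false] with hG
  have hxs := fun i => edge_struct hS hns (x i)
  choose nx hnx1 hnx2 using hxs
  have hys := fun i => edge_struct hS hns (y i)
  choose ny hny1 hny2 using hys
  have hterx : ∀ i, G.ter (x i) = Vk S (nx (i+1)) := by
    intro i
    have h1 : G.ter (x i) = G.ini (x (i+1)) := hbx i
    rw [h1]
    exact hnx1 (i+1)
  have htery : ∀ i, G.ter (y i) = Vk S (ny (i+1)) := by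
    intro i
    have h1 : G.ter (y i) = G.ini (y (i+1)) := hby i
    rw [h1]
    exact hny1 (i+1)
  have htrx : ∀ i, ((x i).1.2.1 = true ∧ nx (i+1) = nx i + 1) ∨
      ((x i).1.2.1 = false ∧ nx i ∈ S ∧ nx (i+1) = 0) := by
    intro i
    rcases hnx2 i with ⟨ht, he⟩ | ⟨ht, hks, he⟩
    · left
      refine ⟨ht, vk_inj hS hns ?_⟩
      have h2 : G.ter (x i) = Vk S (nx i + 1) := he
      exact (hterx i).symm.trans h2
    · right
      refine ⟨ht, hks, vk_inj hS hns ?_⟩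
      have h2 : G.ter (x i) = Vk S 0 := he
      exact (hterx i).symm.trans h2
  have htry : ∀ i, ((y i).1.2.1 = true ∧ ny (i+1) = ny i + 1) ∨
      ((y i).1.2.1 = false ∧ ny i ∈ S ∧ ny (i+1) = 0) := by
    intro i
    rcases hny2 i with ⟨ht, he⟩ | ⟨ht, hks, he⟩
    · left
      refine ⟨ht, vk_inj hS hns ?_⟩
      have h2 : G.ter (y i) = Vk S (ny i + 1) := he
      exact (htery i).symm.trans h2
    · right
      refine ⟨ht, hks, vk_inj hS hns ?_⟩
      have h2 : G.ter (y i) = Vk S 0 := he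
      exact (htery i).symm.trans h2
  set e01 : FischerE (Sgap S) [false] :=
    ⟨(Vk S 0, true, Vk S 1), fvert hS hUnb 0, fvert hS hUnb 1, kedge_one hUnb 0⟩ with he01
  -- key lemma: no two 0-labelled edges past the geodesic threshold
  have key : ∀ (w : ℤ → FischerE (Sgap S) [false]) (nw : ℤ → ℕ) (i₀ : ℤ),
      BiPath G w →
      (∀ i, i₀ ≤ i → ∀ n' : ℕ, GeodesicSeg G w i n') →
      (∀ i, (w i).1.1 = Vk S (nw i)) →
      (∀ i, ((w i).1.2.1 = true ∧ nw (i+1) = nw i + 1) ∨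
            ((w i).1.2.1 = false ∧ nw i ∈ S ∧ nw (i+1) = 0)) →
      ∀ j, i₀ ≤ j → (w j).1.2.1 = false → ∀ j₂, j < j₂ → (w j₂).1.2.1 = false → False := by
    intro w nw i₀ hbp hgeo hini htr j hj hlab j₂ hjj hlab₂
    have hterw : ∀ i, G.ter (w i) = Vk S (nw (i+1)) := by
      intro i
      have h1 : G.ter (w i) = G.ini (w (i+1)) := hbp i
      rw [h1]
      exact hini (i+1)
    have h0 : nw (j + 1) = 0 := by
      rcases htr j with ⟨ht, -⟩ | ⟨-, -, he⟩
      · rw [ht] at hlab; simp at hlab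
      · exact he
    have h0' : nw (j₂ + 1) = 0 := by
      rcases htr j₂ with ⟨ht, -⟩ | ⟨-, -, he⟩
      · rw [ht] at hlab₂; simp at hlab₂
      · exact he
    by_cases hcase : ∃ t : ℤ, j₂ < t ∧ (w t).1.2.1 = true
    · obtain ⟨t₀, ⟨ht₀gt, ht₀lab⟩, ht₀min⟩ := Int.exists_least_of_bdd
        (P := fun t => j₂ < t ∧ (w t).1.2.1 = true)
        ⟨j₂ + 1, fun z hz => by omega⟩ hcase
      have hzero : ∀ m : ℤ, j₂ + 1 ≤ m → m ≤ t₀ → nw m = 0 := by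
        refine Int.le_induction (fun _ => h0') ?_
        intro m hm ih hm2
        have hlabm : (w m).1.2.1 = false := by
          apply bne_true
          intro hc
          exact absurd (ht₀min m ⟨by omega, hc⟩) (by omega)
        rcases htr m with ⟨ht, -⟩ | ⟨-, -, he⟩
        · rw [ht] at hlabm; simp at hlabm
        · exact he
      have ht₀0 : nw t₀ = 0 := hzero t₀ (by omega) le_rfl
      have hn1 : nw (t₀ + 1) = nw t₀ + 1 := by
        rcases htr t₀ with ⟨-, he⟩ | ⟨hf, -, -⟩
        · exact he
        · rw [ht₀lab] at hf; simp at hf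
      set n := (t₀ - (j+1)).toNat with hn
      have happ := hgeo (j+1) (by omega) n 0 (fun _ => e01) (fun k => k.elim0) ?_ ?_
      · omega
      · show e01.1.1 = G.ini (w (j+1))
        have h1 : G.ini (w (j+1)) = Vk S (nw (j+1)) := hini (j+1)
        rw [h1, h0]
      · show e01.1.2.2 = G.ter (w ((j+1) + (n : ℤ)))
        have e : (j + 1 : ℤ) + (n : ℤ) = t₀ := by omega
        rw [e, hterw t₀, hn1, ht₀0]
    · push_neg at hcase
      have h0S : (0 : ℕ) ∈ S := by
        have hlab3 : (w (j₂+1)).1.2.1 = false := bne_true (hcase (j₂+1) (by omega))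
        rcases htr (j₂+1) with ⟨ht, -⟩ | ⟨-, hks, -⟩
        · rw [ht] at hlab3; simp at hlab3
        · rwa [h0'] at hks
      have h02 : nw (j₂+2) = 0 := by
        have hlab3 : (w (j₂+1)).1.2.1 = false := bne_true (hcase (j₂+1) (by omega))
        rcases htr (j₂+1) with ⟨ht, -⟩ | ⟨-, -, he⟩
        · rw [ht] at hlab3; simp at hlab3
        · rw [show j₂ + 1 + 1 = j₂ + 2 by ring] at he
          exact he
      have h03 : nw (j₂+3) = 0 := by
        have hlab4 : (w (j₂+2)).1.2.1 = false := bne_true (hcase (j₂+2) (by omega))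
        rcases htr (j₂+2) with ⟨ht, -⟩ | ⟨-, -, he⟩
        · rw [ht] at hlab4; simp at hlab4
        · rw [show j₂ + 2 + 1 = j₂ + 3 by ring] at he
          exact he
      set e00 : FischerE (Sgap S) [false] :=
        ⟨(Vk S 0, false, Vk S 0), fvert hS hUnb 0, fvert hS hUnb 0,
          kedge_zero hS hUnb h0S⟩ with he00
      have happ := hgeo (j₂+1) (by omega) 1 0 (fun _ => e00) (fun k => k.elim0) ?_ ?_
      · omega
      · show e00.1.1 = G.ini (w (j₂+1))
        have h1 : G.ini (w (j₂+1)) = Vk S (nw (j₂+1)) := hini (j₂+1)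
        rw [h1, h0']
      · show e00.1.2.2 = G.ter (w ((j₂+1) + ((1:ℕ) : ℤ)))
        have e : (j₂ + 1 : ℤ) + ((1:ℕ) : ℤ) = j₂ + 2 := by push_cast; ring
        rw [e, hterw (j₂+2), show j₂ + 2 + 1 = j₂ + 3 by ring, h03]
  -- eventually all edges are 1-labelled
  have hJx : ∃ J : ℤ, ix ≤ J ∧ 0 ≤ J ∧ ∀ i, J ≤ i → (x i).1.2.1 = true := by
    by_cases hzx : ∃ j, ix ≤ j ∧ (x j).1.2.1 = false
    · obtain ⟨js, hj1, hj2⟩ := hzx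
      refine ⟨max (js + 1) 0, le_trans (by omega) (le_max_left _ _), le_max_right _ _, ?_⟩
      intro i hi
      by_contra hc
      have hcf : (x i).1.2.1 = false := bne_true hc
      have hgt : js < i := lt_of_lt_of_le (by omega) (le_trans (le_max_left _ _) hi)
      exact key x nx ix hbx hgx hnx1 htrx js hj1 hj2 i hgt hcf
    · push_neg at hzx
      exact ⟨max ix 0, le_max_left _ _, le_max_right _ _,
        fun i hi => bne_false (hzx i (le_trans (le_max_left _ _) hi))⟩
  obtain ⟨Jx, hJxix, hJx0, hJxlab⟩ := hJx
  have hJy : ∃ J : ℤ, iy ≤ J ∧ 0 ≤ J ∧ ∀ i, J ≤ i → (y i).1.2.1 = true := by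
    by_cases hzy : ∃ j, iy ≤ j ∧ (y j).1.2.1 = false
    · obtain ⟨js, hj1, hj2⟩ := hzy
      refine ⟨max (js + 1) 0, le_trans (by omega) (le_max_left _ _), le_max_right _ _, ?_⟩
      intro i hi
      by_contra hc
      have hcf : (y i).1.2.1 = false := bne_true hc
      have hgt : js < i := lt_of_lt_of_le (by omega) (le_trans (le_max_left _ _) hi)
      exact key y ny iy hby hgy hny1 htry js hj1 hj2 i hgt hcf
    · push_neg at hzy
      exact ⟨max iy 0, le_max_left _ _, le_max_right _ _,
        fun i hi => bne_false (hzy i (le_trans (le_max_left _ _) hi))⟩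
  obtain ⟨Jy, hJyiy, hJy0, hJylab⟩ := hJy
  set J := max Jx Jy with hJdef
  have hJx' : Jx ≤ J := le_max_left _ _
  have hJy' : Jy ≤ J := le_max_right _ _
  have hJ0 : 0 ≤ J := le_trans hJx0 hJx'
  obtain ⟨i₀, hi₀⟩ := hp1 J.toNat
  set p := max (i₀ : ℤ) J with hpdef
  have hpJ : J ≤ p := le_max_right _ _
  have hpi₀ : (i₀ : ℤ) ≤ p := le_max_left _ _
  have hxyp : x p = y p := by
    rcases le_or_gt J (i₀ : ℤ) with h | h
    · have hpe : p = (i₀ : ℤ) := max_eq_left h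
      have h1 := hi₀ 0 (Nat.zero_le _)
      have e : p = (i₀ : ℤ) + ((0 : ℕ) : ℤ) := by rw [hpe]; simp
      rw [e]
      exact h1
    · have hpe : p = J := max_eq_right h.le
      have hk : (J - i₀).toNat ≤ J.toNat := by omega
      have h1 := hi₀ (J - i₀).toNat hk
      have e : p = (i₀ : ℤ) + (((J - i₀).toNat : ℕ) : ℤ) := by
        rw [hpe]; omega
      rw [e]
      exact h1
  have hsame : ∀ i, p ≤ i → x i = y i := by
    refine Int.le_induction hxyp ?_
    intro i hpi ih
    have h1 := hterx i
    rw [ih] at h1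
    have hnn : nx (i+1) = ny (i+1) := vk_inj hS hns (h1.symm.trans (htery i))
    have hlx : (x (i+1)).1.2.1 = true := hJxlab (i+1) (by omega)
    have hly : (y (i+1)).1.2.1 = true := hJylab (i+1) (by omega)
    have htx : (x (i+1)).1.2.2 = Vk S (nx (i+1) + 1) := by
      rcases hnx2 (i+1) with ⟨-, he⟩ | ⟨hf, -, -⟩
      · exact he
      · rw [hlx] at hf; simp at hf
    have hty : (y (i+1)).1.2.2 = Vk S (ny (i+1) + 1) := by
      rcases hny2 (i+1) with ⟨-, he⟩ | ⟨hf, -, -⟩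
      · exact he
      · rw [hly] at hf; simp at hf
    apply Subtype.ext
    apply Prod.ext
    · rw [hnx1 (i+1), hny1 (i+1), hnn]
    · apply Prod.ext
      · rw [hlx, hly]
      · rw [htx, hty, hnn]
  obtain ⟨i, hiN, hine⟩ := hp2 p.toNat
  exact hine (hsame (i : ℤ) (by omega))


end Part1


theorem stmt15 (S : Set ℕ) (hS : S.Nonempty) (hns : ¬ Sofic (Sgap S)) :
    ¬ HasEvGeoProxPair (FischerGraph (Sgap S) [false]) ∧ DirectPrime (Sgap S) := by
  exact ⟨no_evgeo hS hns, sgap_direct_prime hS hns⟩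

end Paper
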